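/- arXiv:2305.02250 — 5 statements merged into one kernel-verified Lean document; each statement's English description precedes it below -/
import Mathlib

section
/- Let ν be a lattice path. Every linear interval of length 2 in the ν-Dyck lattice D(ν) is either a left interval or a right interval. -/
/-!
Common definitions for the paper "The alt ν-Tamari lattices".

A lattice path ν from (0,0) to (m,n) is encoded as the list (ν_0, ..., ν_n)
of its east-step block lengths (ν_0 initial east steps, ν_i the east steps
immediately following the i-th north step).  Thus `ν.length = n + 1` and
`ν.sum = m`.
-/

/-- `μ` is a ν-path: same endpoints as `ν` and weakly above `ν`. -/
def IsNuPath (ν μ : List ℕ) : Prop :=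
  μ.length = ν.length ∧ (∀ j : ℕ, (μ.take j).sum ≤ (ν.take j).sum) ∧ μ.sum = ν.sum

/-! ### The ν-Dyck lattice -/

/-- The Dyck order: `P ≤ Q` iff `Q` lies weakly above `P`. -/
def dyckLE (P Q : List ℕ) : Prop := ∀ j : ℕ, (Q.take j).sum ≤ (P.take j).sum

/-- Covering relation of the ν-Dyck lattice. -/
def dyckCovBy (ν P Q : List ℕ) : Prop :=
  IsNuPath ν P ∧ IsNuPath ν Q ∧ dyckLE P Q ∧ P ≠ Q ∧
    ∀ R, IsNuPath ν R → dyckLE P R → dyckLE R Q → R = P ∨ R = Q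

/-- `[P,Q]` is a linear interval of length `ℓ` in the ν-Dyck lattice:
the interval is totally ordered and there is a maximal chain of length `ℓ`
from `P` to `Q`. -/
def IsDyckLinear (ν P Q : List ℕ) (ℓ : ℕ) : Prop :=
  IsNuPath ν P ∧ IsNuPath ν Q ∧ dyckLE P Q ∧
  (∀ R S, IsNuPath ν R → IsNuPath ν S → dyckLE P R → dyckLE R Q →
    dyckLE P S → dyckLE S Q → dyckLE R S ∨ dyckLE S R) ∧
  ∃ c : ℕ → List ℕ, c 0 = P ∧ c ℓ = Q ∧ ∀ k, k < ℓ → dyckCovBy ν (c k) (c (k + 1))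

/-- `[P,Q]` is a left interval in the ν-Dyck lattice: `Q` is obtained from `P`
by replacing a consecutive subword `E^ℓ N` by `N E^ℓ` (the `ℓ` east steps are
moved from the block before the `(i+1)`-st north step to the block after it). -/
def IsLeftDyck (ν P Q : List ℕ) (ℓ : ℕ) : Prop :=
  IsNuPath ν P ∧ IsNuPath ν Q ∧ 1 ≤ ℓ ∧
  ∃ i, i + 1 < P.length ∧ ℓ ≤ P.getD i 0 ∧
    Q = (P.set i (P.getD i 0 - ℓ)).set (i + 1) (P.getD (i + 1) 0 + ℓ)

/-- `[P,Q]` is a right interval in the ν-Dyck lattice: `Q` is obtained from `P`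
by replacing a consecutive subword `E N^ℓ` by `N^ℓ E`. -/
def IsRightDyck (ν P Q : List ℕ) (ℓ : ℕ) : Prop :=
  IsNuPath ν P ∧ IsNuPath ν Q ∧ 1 ≤ ℓ ∧
  ∃ i, i + ℓ < P.length ∧ 1 ≤ P.getD i 0 ∧ (∀ j, i < j → j < i + ℓ → P.getD j 0 = 0) ∧
    Q = (P.set i (P.getD i 0 - 1)).set (i + ℓ) (P.getD (i + ℓ) 0 + 1)

/-! ### Increment vectors, δ-rotations and alt ν-Tamari posets -/

/-- `δ = (δ_1, …, δ_n)` is an increment vector with respect to `ν`: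
`δ_i ≤ ν_i` for `1 ≤ i ≤ n`.  (List index `i` of `δ` holds `δ_{i+1}`.) -/
def IsIncrement (ν δ : List ℕ) : Prop :=
  δ.length + 1 = ν.length ∧ ∀ i, i < δ.length → δ.getD i 0 ≤ ν.getD (i + 1) 0

/-- `μ'` is the δ-rotation of `μ` at the valley preceding the `(i+1)`-st north
step.  The δ-excursion starting with the `(i+1)`-st north step ends in block `k`
(the first block where the δ-altitude returns to its value at the valley), and
the east step of the valley is exchanged with this excursion, i.e. moved from
block `i` to block `k`. -/
def IsDeltaRotation (δ μ μ' : List ℕ) (i : ℕ) : Prop :=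
  i + 1 < μ.length ∧ 1 ≤ μ.getD i 0 ∧
  ∃ k, i < k ∧ k < μ.length ∧
    (∑ t ∈ Finset.Ico i k, δ.getD t 0) ≤ (∑ t ∈ Finset.Ico (i + 1) (k + 1), μ.getD t 0) ∧
    (∀ k', i < k' → k' < k →
      (∑ t ∈ Finset.Ico (i + 1) (k' + 1), μ.getD t 0) < (∑ t ∈ Finset.Ico i k', δ.getD t 0)) ∧
    μ' = (μ.set i (μ.getD i 0 - 1)).set k (μ.getD k 0 + 1)

/-- `Q` is obtained from `P` by a δ-rotation at some valley. -/
def DRot (δ P Q : List ℕ) : Prop := ∃ i, IsDeltaRotation δ P Q i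

/-- The alt ν-Tamari order: reflexive transitive closure of δ-rotations. -/
def altLE (δ : List ℕ) : List ℕ → List ℕ → Prop := Relation.ReflTransGen (DRot δ)

/-- The path ν̌ = (ν̌_0, δ_1, …, δ_n) with ν̌_0 = Σν_i − Σδ_i. -/
def nuCheck (ν δ : List ℕ) : List ℕ := (ν.sum - δ.sum) :: δ

/-- `μ'` is the ω-rotation (in the sense of the ν-Tamari lattice, defined via
the ω-altitude `alt_ω(x,y) = ω_0 + ⋯ + ω_y − x`) of `μ` at the valley preceding
the `(i+1)`-st north step: the east step of the valley is exchanged with the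
subpath from the valley to the next lattice point of the same ω-altitude,
which ends in block `k`. -/
def IsNuRotation (ω μ μ' : List ℕ) (i : ℕ) : Prop :=
  i + 1 < μ.length ∧ 1 ≤ μ.getD i 0 ∧
  ∃ k, i < k ∧ k < μ.length ∧
    (ω.take (k + 1)).sum + (μ.take (i + 1)).sum ≤
      (ω.take (i + 1)).sum + (μ.take (k + 1)).sum ∧
    (∀ k', i < k' → k' < k →
      (ω.take (i + 1)).sum + (μ.take (k' + 1)).sum <
        (ω.take (k' + 1)).sum + (μ.take (i + 1)).sum) ∧
    μ' = (μ.set i (μ.getD i 0 - 1)).set k (μ.getD k 0 + 1)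

/-- The ω-Tamari order on ω-paths: closure of ω-rotations. -/
def tamLE (ω : List ℕ) : List ℕ → List ℕ → Prop :=
  Relation.ReflTransGen (fun P Q => ∃ i, IsNuRotation ω P Q i)

/-- Covering relation of the alt ν-Tamari poset `T_ν(δ)`. -/
def altCovBy (ν δ P Q : List ℕ) : Prop :=
  IsNuPath ν P ∧ IsNuPath ν Q ∧ altLE δ P Q ∧ P ≠ Q ∧
    ∀ R, IsNuPath ν R → altLE δ P R → altLE δ R Q → R = P ∨ R = Q

/-- `[P,Q]` is a linear interval of length `ℓ` in the alt ν-Tamari poset. -/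
def IsAltLinear (ν δ P Q : List ℕ) (ℓ : ℕ) : Prop :=
  IsNuPath ν P ∧ IsNuPath ν Q ∧ altLE δ P Q ∧
  (∀ R S, IsNuPath ν R → IsNuPath ν S → altLE δ P R → altLE δ R Q →
    altLE δ P S → altLE δ S Q → altLE δ R S ∨ altLE δ S R) ∧
  ∃ c : ℕ → List ℕ, c 0 = P ∧ c ℓ = Q ∧ ∀ k, k < ℓ → altCovBy ν δ (c k) (c (k + 1))

/-! ### ω-trees -/

/-- The lattice points of the Ferrers diagram `F_ω` weakly above `ω`:
points `(x,y)` with `0 ≤ y ≤ n` and `x ≤ ω_0 + ⋯ + ω_y`. -/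
def Lpts (ω : List ℕ) : Set (ℕ × ℕ) :=
  {p : ℕ × ℕ | p.2 < ω.length ∧ p.1 ≤ (ω.take (p.2 + 1)).sum}

/-- `p` and `q` are ω-incompatible: one is strictly southwest of the other and
the smallest rectangle containing them lies in `F_ω` (equivalently, its
bottom-right corner is a lattice point of `F_ω`). -/
def Incomp (ω : List ℕ) (p q : ℕ × ℕ) : Prop :=
  ((p.1 < q.1 ∧ p.2 < q.2) ∨ (q.1 < p.1 ∧ q.2 < p.2)) ∧
    (max p.1 q.1, min p.2 q.2) ∈ Lpts ω

/-- All elements of `T` are pairwise ω-compatible. -/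
def PairwiseCompat (ω : List ℕ) (T : Set (ℕ × ℕ)) : Prop :=
  ∀ p ∈ T, ∀ q ∈ T, ¬ Incomp ω p q

/-- An ω-tree: a maximal collection of pairwise ω-compatible points of `L_ω`. -/
def IsTree (ω : List ℕ) (T : Set (ℕ × ℕ)) : Prop :=
  T ⊆ Lpts ω ∧ PairwiseCompat ω T ∧
    ∀ T', T ⊆ T' → T' ⊆ Lpts ω → PairwiseCompat ω T' → T' = T

/-- The ω-rotation of `T` at `q`: there are `p, r ∈ T` with `q` the lower-left
corner of the rectangle `p□r` (so `p` is above `q` in its column and `r` to the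
right of `q` in its row), no other element of `T` lies in `p□r`, and `T'` is
obtained by replacing `q` by the upper-right corner of `p□r`. -/
def RotationAt (ω : List ℕ) (T : Set (ℕ × ℕ)) (q : ℕ × ℕ) (T' : Set (ℕ × ℕ)) : Prop :=
  ∃ p r, p ∈ T ∧ q ∈ T ∧ r ∈ T ∧ p.1 = q.1 ∧ q.2 < p.2 ∧ r.2 = q.2 ∧ q.1 < r.1 ∧
    (∀ s ∈ T, q.1 ≤ s.1 → s.1 ≤ r.1 → q.2 ≤ s.2 → s.2 ≤ p.2 → s = p ∨ s = q ∨ s = r) ∧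
    T' = insert (r.1, p.2) (T \ {q})

/-- `T'` is obtained from `T` by an ω-rotation. -/
def TreeRotation (ω : List ℕ) (T T' : Set (ℕ × ℕ)) : Prop := ∃ q, RotationAt ω T q T'

/-- One rotation step between ω-trees. -/
def tRot (ω : List ℕ) (T T' : Set (ℕ × ℕ)) : Prop :=
  IsTree ω T ∧ IsTree ω T' ∧ TreeRotation ω T T'

/-- The rotation order on ω-trees. -/
def treeLE (ω : List ℕ) : Set (ℕ × ℕ) → Set (ℕ × ℕ) → Prop :=
  Relation.ReflTransGen (tRot ω)

/-- Covering relation of the rotation poset of ω-trees. -/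
def treeCovBy (ω : List ℕ) (T T' : Set (ℕ × ℕ)) : Prop :=
  IsTree ω T ∧ IsTree ω T' ∧ treeLE ω T T' ∧ T ≠ T' ∧
    ∀ R, IsTree ω R → treeLE ω T R → treeLE ω R T' → R = T ∨ R = T'

/-- `[T,T']` is a linear interval of length `ℓ` in the rotation poset of ω-trees. -/
def IsTreeLinear (ω : List ℕ) (T T' : Set (ℕ × ℕ)) (ℓ : ℕ) : Prop :=
  IsTree ω T ∧ IsTree ω T' ∧ treeLE ω T T' ∧
  (∀ R S, IsTree ω R → IsTree ω S → treeLE ω T R → treeLE ω R T' →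
    treeLE ω T S → treeLE ω S T' → treeLE ω R S ∨ treeLE ω S R) ∧
  ∃ c : ℕ → Set (ℕ × ℕ), c 0 = T ∧ c ℓ = T' ∧ ∀ k, k < ℓ → treeCovBy ω (c k) (c (k + 1))

/-- `q 0, …, q ℓ` is a sequence of consecutive nodes of `T` in the same row,
ordered from left to right. -/
def ConsecRow (T : Set (ℕ × ℕ)) (q : ℕ → ℕ × ℕ) (ℓ : ℕ) : Prop :=
  (∀ i, i ≤ ℓ → q i ∈ T) ∧ (∀ i, i ≤ ℓ → (q i).2 = (q 0).2) ∧
  (∀ i, i < ℓ → (q i).1 < (q (i + 1)).1) ∧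
  (∀ i, i < ℓ → ∀ s ∈ T, s.2 = (q 0).2 → (q i).1 < s.1 → s.1 < (q (i + 1)).1 → False)

/-- `q 0, …, q ℓ` is a sequence of consecutive nodes of `T` in the same column,
ordered from bottom to top. -/
def ConsecCol (T : Set (ℕ × ℕ)) (q : ℕ → ℕ × ℕ) (ℓ : ℕ) : Prop :=
  (∀ i, i ≤ ℓ → q i ∈ T) ∧ (∀ i, i ≤ ℓ → (q i).1 = (q 0).1) ∧
  (∀ i, i < ℓ → (q i).2 < (q (i + 1)).2) ∧
  (∀ i, i < ℓ → ∀ s ∈ T, s.1 = (q 0).1 → (q i).2 < s.2 → s.2 < (q (i + 1)).2 → False)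

/-- `[T,T']` is a left interval of length `ℓ` in the rotation poset of ω-trees:
`T'` is obtained from `T` by applying `ℓ > 0` successive rotations at the first
`ℓ` nodes of a sequence `q 0, …, q ℓ` of consecutive nodes of `T` in the same
row, from left to right. -/
def IsLeftTreeItv (ω : List ℕ) (T T' : Set (ℕ × ℕ)) (ℓ : ℕ) : Prop :=
  IsTree ω T ∧ 1 ≤ ℓ ∧
  ∃ q : ℕ → ℕ × ℕ, ConsecRow T q ℓ ∧
    ∃ c : ℕ → Set (ℕ × ℕ), c 0 = T ∧ c ℓ = T' ∧
      ∀ k, k < ℓ → RotationAt ω (c k) (q k) (c (k + 1))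

/-- `[T,T']` is a right interval of length `ℓ` in the rotation poset of ω-trees:
`T'` is obtained from `T` by applying `ℓ > 0` successive rotations at the first
`ℓ` nodes of a sequence `q 0, …, q ℓ` of consecutive nodes of `T` in the same
column, from bottom to top. -/
def IsRightTreeItv (ω : List ℕ) (T T' : Set (ℕ × ℕ)) (ℓ : ℕ) : Prop :=
  IsTree ω T ∧ 1 ≤ ℓ ∧
  ∃ q : ℕ → ℕ × ℕ, ConsecCol T q ℓ ∧
    ∃ c : ℕ → Set (ℕ × ℕ), c 0 = T ∧ c ℓ = T' ∧
      ∀ k, k < ℓ → RotationAt ω (c k) (q k) (c (k + 1))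

/-! ### (δ,ν)-trees -/

/-- The lattice points `L_{δ,ν}` of the shape `F_{δ,ν}`: points of `L_ν̌` lying
weakly above the path ν̂ = W^{ν_0} N W^{ν_1−δ_1} ⋯ N W^{ν_n−δ_n} starting at
`(ν̌_0, 0)`.  At height `y` these are the `x` with
`ν̌_0 − ν_0 − Σ_{i≤y}(ν_i−δ_i) ≤ x ≤ ν̌_0 + δ_1 + ⋯ + δ_y`, written here without
natural subtraction. -/
def Ldn (ν δ : List ℕ) : Set (ℕ × ℕ) :=
  {p : ℕ × ℕ | p.2 < ν.length ∧
    ν.sum ≤ p.1 + (ν.take (p.2 + 1)).sum + (δ.drop p.2).sum ∧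
    p.1 ≤ ((nuCheck ν δ).take (p.2 + 1)).sum}

/-- A (δ,ν)-tree: a maximal collection of pairwise ν̌-compatible points of `L_{δ,ν}`. -/
def IsDNTree (ν δ : List ℕ) (T : Set (ℕ × ℕ)) : Prop :=
  T ⊆ Ldn ν δ ∧ PairwiseCompat (nuCheck ν δ) T ∧
    ∀ T', T ⊆ T' → T' ⊆ Ldn ν δ → PairwiseCompat (nuCheck ν δ) T' → T' = T

/-- One ν̌-rotation step between (δ,ν)-trees. -/
def dnRot (ν δ : List ℕ) (T T' : Set (ℕ × ℕ)) : Prop :=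
  IsDNTree ν δ T ∧ IsDNTree ν δ T' ∧ TreeRotation (nuCheck ν δ) T T'

/-- The rotation order on (δ,ν)-trees. -/
def dnLE (ν δ : List ℕ) : Set (ℕ × ℕ) → Set (ℕ × ℕ) → Prop :=
  Relation.ReflTransGen (dnRot ν δ)

/-- Covering relation of the rotation poset of (δ,ν)-trees. -/
def dnCovBy (ν δ : List ℕ) (T T' : Set (ℕ × ℕ)) : Prop :=
  IsDNTree ν δ T ∧ IsDNTree ν δ T' ∧ dnLE ν δ T T' ∧ T ≠ T' ∧
    ∀ R, IsDNTree ν δ R → dnLE ν δ T R → dnLE ν δ R T' → R = T ∨ R = T'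

/-- `[T,T']` is a left interval of length `ℓ` in the rotation poset of (δ,ν)-trees. -/
def IsLeftDNItv (ν δ : List ℕ) (T T' : Set (ℕ × ℕ)) (ℓ : ℕ) : Prop :=
  IsDNTree ν δ T ∧ 1 ≤ ℓ ∧
  ∃ q : ℕ → ℕ × ℕ, ConsecRow T q ℓ ∧
    ∃ c : ℕ → Set (ℕ × ℕ), c 0 = T ∧ c ℓ = T' ∧
      ∀ k, k < ℓ → RotationAt (nuCheck ν δ) (c k) (q k) (c (k + 1))

/-- `[T,T']` is a right interval of length `ℓ` in the rotation poset of (δ,ν)-trees. -/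
def IsRightDNItv (ν δ : List ℕ) (T T' : Set (ℕ × ℕ)) (ℓ : ℕ) : Prop :=
  IsDNTree ν δ T ∧ 1 ≤ ℓ ∧
  ∃ q : ℕ → ℕ × ℕ, ConsecCol T q ℓ ∧
    ∃ c : ℕ → Set (ℕ × ℕ), c 0 = T ∧ c ℓ = T' ∧
      ∀ k, k < ℓ → RotationAt (nuCheck ν δ) (c k) (q k) (c (k + 1))

/-! ### Row vectors, column vectors, reduced column vectors -/

/-- Number of points of `T` at height `y`. -/
noncomputable def rowN (T : Set (ℕ × ℕ)) (y : ℕ) : ℕ := {p ∈ T | p.2 = y}.ncard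

/-- Number of points of `T` in column `x`. -/
noncomputable def colTN (T : Set (ℕ × ℕ)) (x : ℕ) : ℕ := {p ∈ T | p.1 = x}.ncard

/-- Number of points of `L_{δ,ν}` in column `x`. -/
noncomputable def colN (ν δ : List ℕ) (x : ℕ) : ℕ := {p ∈ Ldn ν δ | p.1 = x}.ncard

/-- `p` is a relevant point of `L_{δ,ν}`: it is not the leftmost point of its row. -/
def Relevant (ν δ : List ℕ) (p : ℕ × ℕ) : Prop :=
  p ∈ Ldn ν δ ∧ ∃ q ∈ Ldn ν δ, q.2 = p.2 ∧ q.1 < p.1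

/-- Number of relevant points of `L_{δ,ν}` in column `x` (the reduced column at `x`). -/
noncomputable def rcolN (ν δ : List ℕ) (x : ℕ) : ℕ := {p ∈ Ldn ν δ | p.1 = x ∧ Relevant ν δ p}.ncard

/-- Number of points of `T` in the reduced column at `x`. -/
noncomputable def rcolTN (ν δ : List ℕ) (T : Set (ℕ × ℕ)) (x : ℕ) : ℕ :=
  {p ∈ T | p.1 = x ∧ Relevant ν δ p}.ncard

/-- `j` lists the columns `j 0, …, j m` of `L_{δ,ν}` from shortest to longest,
reading from right to left among columns of equal length (here `m = ν.sum`). -/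
def ColOrder (ν δ : List ℕ) (j : ℕ → ℕ) : Prop :=
  (∀ i, i ≤ ν.sum → j i ≤ ν.sum) ∧
  (∀ i i', i ≤ ν.sum → i' ≤ ν.sum → j i = j i' → i = i') ∧
  (∀ i i', i < i' → i' ≤ ν.sum →
    colN ν δ (j i) < colN ν δ (j i') ∨ (colN ν δ (j i) = colN ν δ (j i') ∧ j i' < j i))

/-- `j` lists the reduced columns `j 0, …, j (m-1)` of `L_{δ,ν}` from shortest to
longest, reading from right to left among reduced columns of equal length. -/
def RColOrder (ν δ : List ℕ) (j : ℕ → ℕ) : Prop :=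
  (∀ i, i < ν.sum → 1 ≤ j i ∧ j i ≤ ν.sum) ∧
  (∀ i i', i < ν.sum → i' < ν.sum → j i = j i' → i = i') ∧
  (∀ i i', i < i' → i' < ν.sum →
    rcolN ν δ (j i) < rcolN ν δ (j i') ∨ (rcolN ν δ (j i) = rcolN ν δ (j i') ∧ j i' < j i))

/-- The entry `←ν_i` of the reversed path of `ν`: the number of north steps of
`ν` in column `m − i`. -/
def revNu (ν : List ℕ) (i : ℕ) : ℕ :=
  ((Finset.Ico 1 ν.length).filter (fun t => (ν.take t).sum + i = ν.sum)).card

namespace DyckAux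

def ps (L : List ℕ) (j : ℕ) : ℕ := ∑ t ∈ Finset.range j, L.getD t 0

lemma getD_set_ne (L : List ℕ) (i v t : ℕ) (h : t ≠ i) :
    (L.set i v).getD t 0 = L.getD t 0 := by
  simp [List.getD_eq_getElem?_getD, List.getElem?_set_ne h.symm]

lemma getD_set_self (L : List ℕ) (i v : ℕ) (h : i < L.length) :
    (L.set i v).getD i 0 = v := by
  simp [List.getD_eq_getElem?_getD, List.getElem?_set_self, h]

lemma ps_take (L : List ℕ) (j : ℕ) : (L.take j).sum = ps L j := by
  induction L generalizing j with
  | nil => simp [ps]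
  | cons a L ih =>
    cases j with
    | zero => simp [ps]
    | succ j =>
      simp only [List.take_succ_cons, List.sum_cons, ih, ps, Finset.sum_range_succ',
        List.getD_cons_succ, List.getD_cons_zero]
      ring

lemma ps_succ (L : List ℕ) (j : ℕ) : ps L (j + 1) = ps L j + L.getD j 0 :=
  Finset.sum_range_succ _ _

lemma ps_mono (L : List ℕ) {j k : ℕ} (h : j ≤ k) : ps L j ≤ ps L k :=
  Finset.sum_le_sum_of_subset (Finset.range_subset_range.2 h)

lemma ps_of_len_le (L : List ℕ) {j : ℕ} (h : L.length ≤ j) : ps L j = L.sum := by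
  rw [← ps_take, List.take_of_length_le h]

lemma eq_of_ps (L M : List ℕ) (hlen : L.length = M.length)
    (h : ∀ j, ps L j = ps M j) : L = M := by
  apply List.ext_getElem hlen
  intro n h1 h2
  have e1 := ps_succ L n
  have e2 := ps_succ M n
  rw [h n, h (n+1)] at e1
  have : L.getD n 0 = M.getD n 0 := by omega
  rwa [List.getD_eq_getElem L 0 h1, List.getD_eq_getElem M 0 h2] at this

/-- prefix sums after moving `w` units from index `i` to index `k > i`. -/
lemma ps_set_set (P : List ℕ) (i k w : ℕ) (hik : i < k) (hk : k < P.length)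
    (hw : w ≤ P.getD i 0) (j : ℕ) :
    ps ((P.set i (P.getD i 0 - w)).set k (P.getD k 0 + w)) j
      + (if i < j then w else 0) = ps P j + (if k < j then w else 0) := by
  have hi : i < P.length := lt_trans hik hk
  have hpt : ∀ t, ((P.set i (P.getD i 0 - w)).set k (P.getD k 0 + w)).getD t 0
      + (if t = i then w else 0) = P.getD t 0 + (if t = k then w else 0) := by
    intro t
    by_cases hti : t = i
    · subst hti
      have e : ((P.set t (P.getD t 0 - w)).set k (P.getD k 0 + w)).getD t 0
          = P.getD t 0 - w := by
        rw [getD_set_ne _ _ _ _ (by omega), getD_set_self _ _ _ hi]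
      rw [e, if_pos rfl, if_neg (by omega)]
      omega
    · by_cases htk : t = k
      · subst htk
        have e := getD_set_self (P.set i (P.getD i 0 - w)) t (P.getD t 0 + w)
          (by rw [List.length_set]; exact hk)
        rw [e, if_neg hti, if_pos rfl]
        omega
      · have e : ((P.set i (P.getD i 0 - w)).set k (P.getD k 0 + w)).getD t 0
            = P.getD t 0 := by
          rw [getD_set_ne _ _ _ _ htk, getD_set_ne _ _ _ _ hti]
        rw [e, if_neg hti, if_neg htk]
  have hsum := Finset.sum_congr rfl
    (fun t (_ : t ∈ Finset.range j) => hpt t)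
  rw [Finset.sum_add_distrib, Finset.sum_add_distrib,
      Finset.sum_ite_eq' (Finset.range j) i (fun _ => w),
      Finset.sum_ite_eq' (Finset.range j) k (fun _ => w)] at hsum
  simpa [ps, Finset.mem_range] using hsum

lemma length_set_set (P : List ℕ) (i k : ℕ) (u v : ℕ) :
    ((P.set i u).set k v).length = P.length := by simp

/-- The elementary move at `a`: subtract 1 from prefix sum `a` only. -/
lemma move_facts (ν P : List ℕ) (hP : IsNuPath ν P) (a : ℕ) (ha : 0 < a)
    (halt : a < P.length) (h1 : 1 ≤ P.getD (a - 1) 0) :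
    IsNuPath ν ((P.set (a-1) (P.getD (a-1) 0 - 1)).set a (P.getD a 0 + 1)) ∧
    (∀ j, j ≠ a → ps ((P.set (a-1) (P.getD (a-1) 0 - 1)).set a (P.getD a 0 + 1)) j = ps P j) ∧
    ps ((P.set (a-1) (P.getD (a-1) 0 - 1)).set a (P.getD a 0 + 1)) a + 1 = ps P a := by
  have key := ps_set_set P (a-1) a 1 (by omega) halt h1
  have hne : ∀ j, j ≠ a →
      ps ((P.set (a-1) (P.getD (a-1) 0 - 1)).set a (P.getD a 0 + 1)) j = ps P j := by
    intro j hj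
    have h' := key j
    rcases lt_or_gt_of_ne hj with hlt | hgt
    · rw [if_neg (by omega), if_neg (by omega)] at h'; omega
    · rw [if_pos (by omega), if_pos (by omega)] at h'; omega
  have heq : ps ((P.set (a-1) (P.getD (a-1) 0 - 1)).set a (P.getD a 0 + 1)) a + 1
      = ps P a := by
    have h' := key a
    rw [if_pos (by omega), if_neg (by omega)] at h'
    omega
  have hlen : ((P.set (a-1) (P.getD (a-1) 0 - 1)).set a (P.getD a 0 + 1)).length
      = P.length := length_set_set _ _ _ _ _
  refine ⟨⟨by rw [hlen]; exact hP.1, ?_, ?_⟩, hne, heq⟩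
  · intro j
    rw [ps_take, ps_take]
    by_cases hj : j = a
    · rw [hj]
      have h2 : ps P a ≤ ps ν a := by rw [← ps_take, ← ps_take]; exact hP.2.1 a
      omega
    · rw [hne j hj, ← ps_take, ← ps_take]; exact hP.2.1 j
  · have e1 := hne P.length (by omega)
    rw [ps_of_len_le _ (le_of_eq hlen), ps_of_len_le P (le_refl _)] at e1
    rw [e1]; exact hP.2.2


lemma dyckLE_iff (P Q : List ℕ) : dyckLE P Q ↔ ∀ j, ps Q j ≤ ps P j := by
  unfold dyckLE; simp only [ps_take]

lemma cover_struct (ν P Q : List ℕ) (h : dyckCovBy ν P Q) :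
    ∃ a, 0 < a ∧ a < P.length ∧ (∀ j, j ≠ a → ps Q j = ps P j) ∧ ps Q a + 1 = ps P a := by
  classical
  obtain ⟨hP, hQ, hle, hne, hmin⟩ := h
  rw [dyckLE_iff] at hle
  have hlen : Q.length = P.length := by rw [hP.1, hQ.1]
  have hex : ∃ j, ps Q j ≠ ps P j := by
    by_contra hc
    push_neg at hc
    exact hne (eq_of_ps P Q hlen.symm (fun j => (hc j).symm))
  set a := Nat.find hex with haa
  have hspec : ps Q a ≠ ps P a := Nat.find_spec hex
  have hmin' : ∀ j, j < a → ps Q j = ps P j := fun j hj =>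
    not_ne_iff.mp (Nat.find_min hex hj)
  have ha0 : 0 < a := by
    rcases Nat.eq_zero_or_pos a with h0 | h0
    · exact absurd (by simp [h0, ps]) hspec
    · exact h0
  have halt : a < P.length := by
    by_contra hc
    push_neg at hc
    have e1 : ps Q a = Q.sum := ps_of_len_le Q (by omega)
    have e2 : ps P a = P.sum := ps_of_len_le P (by omega)
    rw [e1, e2, hQ.2.2, hP.2.2] at hspec
    exact hspec rfl
  have hlt : ps Q a < ps P a := lt_of_le_of_ne (hle a) hspec
  have h1 : 1 ≤ P.getD (a - 1) 0 := by
    have e := ps_succ P (a - 1)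
    rw [show a - 1 + 1 = a by omega] at e
    have e2 : ps Q (a - 1) = ps P (a - 1) := hmin' _ (by omega)
    have e3 : ps Q (a - 1) ≤ ps Q a := ps_mono Q (by omega)
    omega
  obtain ⟨hRpath, hRne, hReq⟩ := move_facts ν P hP a ha0 halt h1
  have hPR : dyckLE P ((P.set (a-1) (P.getD (a-1) 0 - 1)).set a (P.getD a 0 + 1)) := by
    rw [dyckLE_iff]
    intro j
    by_cases hj : j = a
    · rw [hj]; omega
    · rw [hRne j hj]
  have hRQ : dyckLE ((P.set (a-1) (P.getD (a-1) 0 - 1)).set a (P.getD a 0 + 1)) Q := by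
    rw [dyckLE_iff]
    intro j
    by_cases hj : j = a
    · rw [hj]; omega
    · rw [hRne j hj]; exact hle j
  rcases hmin _ hRpath hPR hRQ with hc | hc
  · exfalso
    have := congrArg (fun L => ps L a) hc
    omega
  · refine ⟨a, ha0, halt, fun j hj => by rw [← hc]; exact hRne j hj, by rw [← hc]; exact hReq⟩

lemma key (ν P Q : List ℕ) (hP : IsNuPath ν P) (hQ : IsNuPath ν Q)
    (hlin : ∀ R S, IsNuPath ν R → IsNuPath ν S → dyckLE P R → dyckLE R Q →
      dyckLE P S → dyckLE S Q → dyckLE R S ∨ dyckLE S R)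
    (a b : ℕ) (hab : a < b) (ha : 0 < a) (hb : b < P.length)
    (hqa : ps Q a + 1 = ps P a) (hqb : ps Q b + 1 = ps P b)
    (ho : ∀ j, j ≠ a → j ≠ b → ps Q j = ps P j) :
    (∃ ℓ, IsLeftDyck ν P Q ℓ) ∨ ∃ ℓ, IsRightDyck ν P Q ℓ := by
  have hlenPQ : Q.length = P.length := by rw [hP.1, hQ.1]
  have h1a : 1 ≤ P.getD (a - 1) 0 := by
    have e := ps_succ P (a - 1)
    rw [show a - 1 + 1 = a by omega] at e
    have e2 : ps Q (a - 1) = ps P (a - 1) := ho _ (by omega) (by omega)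
    have e3 : ps Q (a - 1) ≤ ps Q a := ps_mono Q (by omega)
    omega
  by_cases hz : b = a + 1 ∧ P.getD a 0 = 0
  · obtain ⟨hz1, hz2⟩ := hz
    right
    refine ⟨2, hP, hQ, by norm_num, a - 1, by omega, h1a, ?_, ?_⟩
    · intro j hj1 hj2
      have hja : j = a := by omega
      rw [hja]; exact hz2
    · rw [show a - 1 + 2 = b by omega]
      apply eq_of_ps Q _ (by rw [hlenPQ, length_set_set])
      intro j
      have k := ps_set_set P (a-1) b 1 (by omega) hb h1a j
      by_cases hja : j ≤ a - 1
      · rw [if_neg (by omega), if_neg (by omega)] at k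
        rw [ho j (by omega) (by omega)]
        omega
      · by_cases hjb : j ≤ b
        · rw [if_pos (by omega), if_neg (by omega)] at k
          have hjd : j = a ∨ j = b := by omega
          rcases hjd with rfl | rfl <;> omega
        · rw [if_pos (by omega), if_pos (by omega)] at k
          rw [ho j (by omega) (by omega)]
          omega
  · exfalso
    have h1b : 1 ≤ P.getD (b - 1) 0 := by
      by_cases hba : b = a + 1
      · have hnz : P.getD a 0 ≠ 0 := fun hc => hz ⟨hba, hc⟩
        rw [show b - 1 = a by omega]
        omega
      · have e := ps_succ P (b - 1)
        rw [show b - 1 + 1 = b by omega] at e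
        have e2 : ps Q (b - 1) = ps P (b - 1) := ho _ (by omega) (by omega)
        have e3 : ps Q (b - 1) ≤ ps Q b := ps_mono Q (by omega)
        omega
    obtain ⟨hR1, hR1ne, hR1eq⟩ := move_facts ν P hP a ha (by omega) h1a
    obtain ⟨hR2, hR2ne, hR2eq⟩ := move_facts ν P hP b (by omega) hb h1b
    have hQP : ∀ j, ps Q j ≤ ps P j := by
      intro j
      by_cases h1 : j = a
      · rw [h1]; omega
      · by_cases h2 : j = b
        · rw [h2]; omega
        · rw [ho j h1 h2]
    have hPR1 : dyckLE P ((P.set (a-1) (P.getD (a-1) 0 - 1)).set a (P.getD a 0 + 1)) := by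
      rw [dyckLE_iff]; intro j
      by_cases hj : j = a
      · rw [hj]; omega
      · rw [hR1ne j hj]
    have hR1Q : dyckLE ((P.set (a-1) (P.getD (a-1) 0 - 1)).set a (P.getD a 0 + 1)) Q := by
      rw [dyckLE_iff]; intro j
      by_cases hj : j = a
      · rw [hj]; omega
      · rw [hR1ne j hj]; exact hQP j
    have hPR2 : dyckLE P ((P.set (b-1) (P.getD (b-1) 0 - 1)).set b (P.getD b 0 + 1)) := by
      rw [dyckLE_iff]; intro j
      by_cases hj : j = b
      · rw [hj]; omega
      · rw [hR2ne j hj]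
    have hR2Q : dyckLE ((P.set (b-1) (P.getD (b-1) 0 - 1)).set b (P.getD b 0 + 1)) Q := by
      rw [dyckLE_iff]; intro j
      by_cases hj : j = b
      · rw [hj]; omega
      · rw [hR2ne j hj]; exact hQP j
    rcases hlin _ _ hR1 hR2 hPR1 hR1Q hPR2 hR2Q with hc | hc
    · rw [dyckLE_iff] at hc
      have := hc a
      rw [hR2ne a (by omega)] at this
      omega
    · rw [dyckLE_iff] at hc
      have := hc b
      rw [hR1ne b (by omega)] at this
      omega

end DyckAux

open DyckAux

/-- Every linear interval of length 2 in the ν-Dyck lattice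
`D(ν)` is either a left interval or a right interval. -/
theorem dyck_linear_length_two_left_or_right (ν P Q : List ℕ) (hν : ν ≠ [])
    (h : IsDyckLinear ν P Q 2) :
    (∃ ℓ, IsLeftDyck ν P Q ℓ) ∨ ∃ ℓ, IsRightDyck ν P Q ℓ := by
  obtain ⟨hP, hQ, hPQ, hlin, c, hc0, hc2, hcov⟩ := h
  have h01 : dyckCovBy ν P (c 1) := by
    have := hcov 0 (by norm_num); rwa [hc0] at this
  have h12 : dyckCovBy ν (c 1) Q := by
    have := hcov 1 (by norm_num); rwa [hc2] at this
  obtain ⟨a1, ha1, ha1l, hM1, hM1e⟩ := cover_struct ν P (c 1) h01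
  obtain ⟨a2, ha2, ha2l, hM2, hM2e⟩ := cover_struct ν (c 1) Q h12
  have hlenM : (c 1).length = P.length := by rw [h01.2.1.1, hP.1]
  have ha2l' : a2 < P.length := by omega
  by_cases h12' : a1 = a2
  · subst h12'
    left
    have hQa : ps Q a1 + 2 = ps P a1 := by omega
    have hQo : ∀ j, j ≠ a1 → ps Q j = ps P j := fun j hj => by
      rw [hM2 j hj, hM1 j hj]
    have h2 : 2 ≤ P.getD (a1 - 1) 0 := by
      have e := ps_succ P (a1 - 1)
      rw [show a1 - 1 + 1 = a1 by omega] at e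
      have e2 : ps Q (a1 - 1) = ps P (a1 - 1) := hQo _ (by omega)
      have e3 : ps Q (a1 - 1) ≤ ps Q a1 := ps_mono Q (by omega)
      omega
    refine ⟨2, hP, hQ, by norm_num, a1 - 1, by omega, h2, ?_⟩
    rw [show a1 - 1 + 1 = a1 by omega]
    apply eq_of_ps Q _ (by rw [length_set_set, hQ.1, hP.1])
    intro j
    have k := ps_set_set P (a1-1) a1 2 (by omega) ha1l h2 j
    by_cases hja : j ≤ a1 - 1
    · rw [if_neg (by omega), if_neg (by omega)] at k
      rw [hQo j (by omega)]; omega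
    · by_cases hjb : j ≤ a1
      · rw [if_pos (by omega), if_neg (by omega)] at k
        have hje : j = a1 := by omega
        subst hje
        omega
      · rw [if_pos (by omega), if_pos (by omega)] at k
        rw [hQo j (by omega)]; omega
  · have hQa1 : ps Q a1 + 1 = ps P a1 := by
      have := hM2 a1 h12'; omega
    have hQa2 : ps Q a2 + 1 = ps P a2 := by
      have := hM1 a2 (fun hc => h12' hc.symm); omega
    have hQo : ∀ j, j ≠ a1 → j ≠ a2 → ps Q j = ps P j := fun j hj1 hj2 => by
      rw [hM2 j hj2, hM1 j hj1]
    rcases lt_or_gt_of_ne h12' with hlt | hgt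
    · exact key ν P Q hP hQ hlin a1 a2 hlt ha1 ha2l' hQa1 hQa2 hQo
    · exact key ν P Q hP hQ hlin a2 a1 hgt ha2 ha1l hQa2 hQa1
        (fun j hj2 hj1 => hQo j hj1 hj2)
end

section
/- Let ν be a lattice path. In the ν-Dyck lattice D(ν), every left interval obtained by replacing a subword E^ℓ N by N E^ℓ, and every right interval obtained by replacing a subword E N^ℓ by N^ℓ E, is a linear interval of length ℓ. Conversely, every nontrivial linear interval in D(ν) is either a left interval or a right interval. -/
namespace DyckAux

def fsum (P : List ℕ) (j : ℕ) : ℕ := (P.take j).sum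

lemma fsum_zero (P : List ℕ) : fsum P 0 = 0 := rfl

lemma fsum_add (P : List ℕ) (j d : ℕ) :
    fsum P (j + d) = fsum P j + ((P.drop j).take d).sum := by
  simp [fsum, List.take_add]

lemma fsum_mono (P : List ℕ) {j k : ℕ} (h : j ≤ k) : fsum P j ≤ fsum P k := by
  obtain ⟨d, rfl⟩ := Nat.exists_eq_add_of_le h
  rw [fsum_add]; omega

lemma fsum_of_le {P : List ℕ} {j : ℕ} (h : P.length ≤ j) : fsum P j = P.sum := by
  simp [fsum, List.take_of_length_le h]

lemma fsum_length (P : List ℕ) : fsum P P.length = P.sum := fsum_of_le le_rfl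

lemma getD_lt {P : List ℕ} {i : ℕ} (h : i < P.length) : P.getD i 0 = P[i] := by
  simp [List.getD_eq_getElem?_getD, List.getElem?_eq_getElem h]

lemma fsum_succ {P : List ℕ} {i : ℕ} (h : i < P.length) :
    fsum P (i + 1) = fsum P i + P.getD i 0 := by
  rw [getD_lt h]
  simpa [fsum] using List.sum_take_succ P i h

lemma ext_of_fsum {P Q : List ℕ} (hlen : P.length = Q.length)
    (h : ∀ j, fsum P j = fsum Q j) : P = Q := by
  apply List.ext_getElem hlen
  intro i h1 h2
  have e1 := fsum_succ h1
  have e2 := fsum_succ h2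
  have h3 := h i
  have h4 := h (i + 1)
  rw [getD_lt h1] at e1
  rw [getD_lt h2] at e2
  omega

lemma getD_set_ne_s1 {l : List ℕ} {i j : ℕ} (h : i ≠ j) (a : ℕ) :
    (l.set i a).getD j 0 = l.getD j 0 := by
  simp [List.getD_eq_getElem?_getD, List.getElem?_set_ne h]

lemma sum_set {l : List ℕ} {n a : ℕ} (h : n < l.length) :
    (l.set n a).sum + l.getD n 0 = l.sum + a := by
  induction l generalizing n with
  | nil => simp at h
  | cons x xs ih =>
    cases n with
    | zero => simp [List.getD]; omega
    | succ n =>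
      simp only [List.set, List.sum_cons, List.getD_cons_succ]
      have := ih (by simpa using h)
      omega

lemma fsum_set_of_le {l : List ℕ} {n a t : ℕ} (h : t ≤ n) :
    fsum (l.set n a) t = fsum l t := by
  unfold fsum
  rw [List.take_set]
  rw [List.set_eq_of_length_le]
  simp; omega

lemma fsum_set_of_lt {l : List ℕ} {n a t : ℕ} (hn : n < l.length) (h : n < t) :
    fsum (l.set n a) t + l.getD n 0 = fsum l t + a := by
  unfold fsum
  rw [List.take_set]
  have hlen : n < (l.take t).length := by simp; omega
  have := sum_set (l := l.take t) (a := a) hlen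
  have hg : (l.take t).getD n 0 = l.getD n 0 := by
    rw [getD_lt hlen, getD_lt hn]
    simp [List.getElem_take]
  omega


/-- Move `k` east steps from block `i` to block `j` (i < j): prefix sums drop by `k` on `(i,j]`. -/
def mv (P : List ℕ) (i j k : ℕ) : List ℕ :=
  (P.set i (P.getD i 0 - k)).set j (P.getD j 0 + k)

lemma mv_length (P : List ℕ) (i j k : ℕ) : (mv P i j k).length = P.length := by
  simp [mv]

lemma fsum_mv_low {P : List ℕ} {i j k t : ℕ} (hij : i < j) (ht : t ≤ i) :
    fsum (mv P i j k) t = fsum P t := by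
  unfold mv
  rw [fsum_set_of_le (by omega), fsum_set_of_le ht]

lemma fsum_mv_mid {P : List ℕ} {i j k t : ℕ} (hij : i < j) (hj : j < P.length)
    (hk : k ≤ P.getD i 0) (ht1 : i < t) (ht2 : t ≤ j) :
    fsum (mv P i j k) t + k = fsum P t := by
  unfold mv
  rw [fsum_set_of_le ht2]
  have := fsum_set_of_lt (l := P) (a := P.getD i 0 - k) (t := t) (by omega) ht1
  omega

lemma fsum_mv_high {P : List ℕ} {i j k t : ℕ} (hij : i < j) (hj : j < P.length)
    (hk : k ≤ P.getD i 0) (ht : j < t) :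
    fsum (mv P i j k) t = fsum P t := by
  unfold mv
  have h1 := fsum_set_of_lt (l := P.set i (P.getD i 0 - k))
    (n := j) (a := P.getD j 0 + k) (t := t) (by simpa using hj) ht
  rw [getD_set_ne_s1 (by omega)] at h1
  have h2 := fsum_set_of_lt (l := P) (n := i) (a := P.getD i 0 - k) (t := t) (by omega) (by omega)
  omega

/-- Move one east step block boundary up: prefix sums rise by `k` on `(i,j]`. -/
def mvUp (Q : List ℕ) (i j k : ℕ) : List ℕ :=
  (Q.set i (Q.getD i 0 + k)).set j (Q.getD j 0 - k)

lemma mvUp_length (Q : List ℕ) (i j k : ℕ) : (mvUp Q i j k).length = Q.length := by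
  simp [mvUp]

lemma fsum_mvUp_low {Q : List ℕ} {i j k t : ℕ} (hij : i < j) (ht : t ≤ i) :
    fsum (mvUp Q i j k) t = fsum Q t := by
  unfold mvUp
  rw [fsum_set_of_le (by omega), fsum_set_of_le ht]

lemma fsum_mvUp_mid {Q : List ℕ} {i j k t : ℕ} (hij : i < j) (hj : j < Q.length)
    (ht1 : i < t) (ht2 : t ≤ j) :
    fsum (mvUp Q i j k) t = fsum Q t + k := by
  unfold mvUp
  rw [fsum_set_of_le ht2]
  have := fsum_set_of_lt (l := Q) (a := Q.getD i 0 + k) (t := t) (by omega) ht1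
  omega

lemma fsum_mvUp_high {Q : List ℕ} {i j k t : ℕ} (hij : i < j) (hj : j < Q.length)
    (hk : k ≤ Q.getD j 0) (ht : j < t) :
    fsum (mvUp Q i j k) t = fsum Q t := by
  unfold mvUp
  have h1 := fsum_set_of_lt (l := Q.set i (Q.getD i 0 + k))
    (n := j) (a := Q.getD j 0 - k) (t := t) (by simpa using hj) ht
  rw [getD_set_ne_s1 (by omega)] at h1
  have h2 := fsum_set_of_lt (l := Q) (n := i) (a := Q.getD i 0 + k) (t := t) (by omega) (by omega)
  omega


lemma dyckLE_trans {P Q R : List ℕ} (h1 : dyckLE P Q) (h2 : dyckLE Q R) : dyckLE P R :=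
  fun t => le_trans (h2 t) (h1 t)

lemma dyckLE_refl (P : List ℕ) : dyckLE P P := fun _ => le_rfl

lemma nupath_fsum {ν μ : List ℕ} (h : IsNuPath ν μ) : ∀ t, fsum μ t ≤ fsum ν t := h.2.1

lemma path_ext {ν P Q : List ℕ} (hP : IsNuPath ν P) (hQ : IsNuPath ν Q)
    (h : ∀ t, fsum P t = fsum Q t) : P = Q :=
  ext_of_fsum (hP.1.trans hQ.1.symm) h

lemma mv_valid {ν P : List ℕ} (hP : IsNuPath ν P) {i j k : ℕ} (hij : i < j)
    (hj : j < P.length) (hk : k ≤ P.getD i 0) :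
    IsNuPath ν (mv P i j k) ∧ dyckLE P (mv P i j k) := by
  have hle : ∀ t, fsum (mv P i j k) t ≤ fsum P t := by
    intro t
    rcases le_or_gt t i with h | h
    · rw [fsum_mv_low hij h]
    rcases le_or_gt t j with h2 | h2
    · have := fsum_mv_mid hij hj hk h h2; omega
    · rw [fsum_mv_high hij hj hk h2]
  have hsum : (mv P i j k).sum = ν.sum := by
    have h1 := fsum_length (mv P i j k)
    rw [mv_length] at h1
    rw [← h1, fsum_mv_high hij hj hk hj, fsum_length, hP.2.2]
  exact ⟨⟨by rw [mv_length, hP.1], fun t => le_trans (hle t) (hP.2.1 t), hsum⟩, hle⟩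

lemma mv_dyckLE_Q {ν P Q : List ℕ} (hP : IsNuPath ν P) (hQ : IsNuPath ν Q)
    (hPQ : dyckLE P Q) {i j k : ℕ} (hij : i < j) (hj : j < P.length) (hk : k ≤ P.getD i 0)
    (hmid : ∀ t, i < t → t ≤ j → fsum Q t + k ≤ fsum P t) :
    dyckLE (mv P i j k) Q := by
  intro t
  show fsum Q t ≤ fsum (mv P i j k) t
  rcases le_or_gt t i with h | h
  · rw [fsum_mv_low hij h]; exact hPQ t
  rcases le_or_gt t j with h2 | h2
  · have := fsum_mv_mid hij hj hk h h2
    have := hmid t h h2; omega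
  · rw [fsum_mv_high hij hj hk h2]; exact hPQ t

lemma mvUp_valid {ν P Q : List ℕ} (hP : IsNuPath ν P) (hQ : IsNuPath ν Q)
    (hPQ : dyckLE P Q) {i j k : ℕ} (hij : i < j) (hj : j < Q.length) (hk : k ≤ Q.getD j 0)
    (hmid : ∀ t, i < t → t ≤ j → fsum Q t + k ≤ fsum P t) :
    IsNuPath ν (mvUp Q i j k) ∧ dyckLE P (mvUp Q i j k) ∧ dyckLE (mvUp Q i j k) Q := by
  have hle : ∀ t, fsum (mvUp Q i j k) t ≤ fsum P t := by
    intro t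
    rcases le_or_gt t i with h | h
    · rw [fsum_mvUp_low hij h]; exact hPQ t
    rcases le_or_gt t j with h2 | h2
    · rw [fsum_mvUp_mid hij hj h h2]; exact hmid t h h2
    · rw [fsum_mvUp_high hij hj hk h2]; exact hPQ t
  have hge : ∀ t, fsum Q t ≤ fsum (mvUp Q i j k) t := by
    intro t
    rcases le_or_gt t i with h | h
    · rw [fsum_mvUp_low hij h]
    rcases le_or_gt t j with h2 | h2
    · rw [fsum_mvUp_mid hij hj h h2]; omega
    · rw [fsum_mvUp_high hij hj hk h2]
  have hsum : (mvUp Q i j k).sum = ν.sum := by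
    have h1 := fsum_length (mvUp Q i j k)
    rw [mvUp_length] at h1
    rw [← h1, fsum_mvUp_high hij hj hk hj, fsum_length, hQ.2.2]
  exact ⟨⟨by rw [mvUp_length, hQ.1], fun t => le_trans (hle t) (hP.2.1 t), hsum⟩, hle, hge⟩


lemma left_to_linear {ν P Q : List ℕ} {ℓ : ℕ} (h : IsLeftDyck ν P Q ℓ) :
    IsDyckLinear ν P Q ℓ := by
  obtain ⟨hP, hQ, hl, i, hi, hk, hQeq⟩ := h
  have hQmv : Q = mv P i (i + 1) ℓ := hQeq
  have hii : i < i + 1 := Nat.lt_succ_self i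
  have hfQ_ne : ∀ t, t ≠ i + 1 → fsum Q t = fsum P t := by
    intro t ht
    rw [hQmv]
    rcases lt_or_gt_of_ne ht with h2 | h2
    · exact fsum_mv_low hii (by omega)
    · exact fsum_mv_high hii hi hk h2
  have hfQ_at : fsum Q (i + 1) + ℓ = fsum P (i + 1) := by
    rw [hQmv]; exact fsum_mv_mid hii hi hk (by omega) le_rfl
  have hPQ : dyckLE P Q := by
    intro t
    show fsum Q t ≤ fsum P t
    by_cases ht : t = i + 1
    · subst ht; omega
    · rw [hfQ_ne t ht]
  refine ⟨hP, hQ, hPQ, ?_, ?_⟩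
  · -- linearity
    intro R S hR hS hPR hRQ hPS hSQ
    have hRne : ∀ t, t ≠ i + 1 → fsum R t = fsum P t := by
      intro t ht
      have h1 : fsum R t ≤ fsum P t := hPR t
      have h2 : fsum Q t ≤ fsum R t := hRQ t
      have := hfQ_ne t ht; omega
    have hSne : ∀ t, t ≠ i + 1 → fsum S t = fsum P t := by
      intro t ht
      have h1 : fsum S t ≤ fsum P t := hPS t
      have h2 : fsum Q t ≤ fsum S t := hSQ t
      have := hfQ_ne t ht; omega
    rcases le_total (fsum R (i + 1)) (fsum S (i + 1)) with h | h
    · right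
      intro t
      show fsum R t ≤ fsum S t
      by_cases ht : t = i + 1
      · subst ht; exact h
      · rw [hRne t ht, hSne t ht]
    · left
      intro t
      show fsum S t ≤ fsum R t
      by_cases ht : t = i + 1
      · subst ht; exact h
      · rw [hRne t ht, hSne t ht]
  · -- the chain
    set c : ℕ → List ℕ := fun k => if k = 0 then P else mv P i (i + 1) (min k ℓ) with hc
    have hcmv : ∀ k, 1 ≤ k → k ≤ ℓ → c k = mv P i (i + 1) k := by
      intro k h1 h2
      simp only [hc, if_neg (by omega : ¬ k = 0), Nat.min_eq_left h2]
    have hcne : ∀ k, k ≤ ℓ → ∀ t, t ≠ i + 1 → fsum (c k) t = fsum P t := by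
      intro k hkl t ht
      rcases Nat.eq_zero_or_pos k with rfl | hpos
      · simp [hc]
      rw [hcmv k hpos hkl]
      rcases lt_or_gt_of_ne ht with h2 | h2
      · exact fsum_mv_low hii (by omega)
      · exact fsum_mv_high hii hi (le_trans hkl hk) h2
    have hcat : ∀ k, k ≤ ℓ → fsum (c k) (i + 1) + k = fsum P (i + 1) := by
      intro k hkl
      rcases Nat.eq_zero_or_pos k with rfl | hpos
      · simp [hc]
      rw [hcmv k hpos hkl]
      exact fsum_mv_mid hii hi (le_trans hkl hk) (by omega) le_rfl
    have hcnu : ∀ k, k ≤ ℓ → IsNuPath ν (c k) := by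
      intro k hkl
      rcases Nat.eq_zero_or_pos k with rfl | hpos
      · simpa [hc] using hP
      rw [hcmv k hpos hkl]
      exact (mv_valid hP hii hi (le_trans hkl hk)).1
    have hbound : ℓ ≤ fsum P (i + 1) := by
      have := fsum_succ (show i < P.length by omega)
      omega
    refine ⟨c, by simp [hc], ?_, ?_⟩
    · rw [hcmv ℓ hl le_rfl, ← hQmv]
    intro k hkl
    have hk1 : k + 1 ≤ ℓ := hkl
    have hck := hcat k (le_of_lt hkl)
    have hck1 := hcat (k + 1) hk1
    refine ⟨hcnu k (le_of_lt hkl), hcnu (k + 1) hk1, ?_, ?_, ?_⟩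
    · intro t
      show fsum (c (k + 1)) t ≤ fsum (c k) t
      by_cases ht : t = i + 1
      · subst ht; omega
      · rw [hcne k (by omega) t ht, hcne (k + 1) hk1 t ht]
    · intro heq
      have := congrArg (fun l => fsum l (i + 1)) heq
      omega
    · intro R hR h1 h2
      have h1' : ∀ t, fsum R t ≤ fsum (c k) t := h1
      have h2' : ∀ t, fsum (c (k + 1)) t ≤ fsum R t := h2
      have hRlen : R.length = (c k).length := by
        rw [hR.1, (hcnu k (le_of_lt hkl)).1]
      have hRne : ∀ t, t ≠ i + 1 → fsum R t = fsum P t := by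
        intro t ht
        have := h1' t; have := h2' t
        rw [hcne k (by omega) t ht] at *
        rw [hcne (k + 1) hk1 t ht] at *
        omega
      have : fsum R (i + 1) = fsum (c k) (i + 1) ∨ fsum R (i + 1) = fsum (c (k + 1)) (i + 1) := by
        have := h1' (i + 1); have := h2' (i + 1); omega
      rcases this with hv | hv
      · left
        refine ext_of_fsum hRlen (fun t => ?_)
        by_cases ht : t = i + 1
        · subst ht; exact hv
        · rw [hRne t ht, hcne k (by omega) t ht]
      · right
        refine ext_of_fsum (by rw [hR.1, (hcnu (k + 1) hk1).1]) (fun t => ?_)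
        by_cases ht : t = i + 1
        · subst ht; exact hv
        · rw [hRne t ht, hcne (k + 1) hk1 t ht]


lemma right_to_linear {ν P Q : List ℕ} {ℓ : ℕ} (h : IsRightDyck ν P Q ℓ) :
    IsDyckLinear ν P Q ℓ := by
  obtain ⟨hP, hQ, hl, i, hilen, hPi, hzero, hQeq⟩ := h
  have hQmv : Q = mv P i (i + ℓ) 1 := hQeq
  have hij : i < i + ℓ := by omega
  -- fsum P is constant on [i+1, i+ℓ]
  have hconst : ∀ t, i + 1 ≤ t → t ≤ i + ℓ → fsum P t = fsum P (i + 1) := by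
    have key : ∀ d, i + 1 + d ≤ i + ℓ → fsum P (i + 1 + d) = fsum P (i + 1) := by
      intro d
      induction d with
      | zero => intro _; rfl
      | succ d ih =>
        intro hd
        have he : i + 1 + (d + 1) = (i + 1 + d) + 1 := by omega
        rw [he]
        have h1 : i + 1 + d < P.length := by omega
        have h2 := fsum_succ h1
        have h3 : P.getD (i + 1 + d) 0 = 0 := hzero _ (by omega) (by omega)
        have := ih (by omega)
        omega
    intro t h1 h2
    have he2 : i + 1 + (t - (i + 1)) = t := by omega
    have := key (t - (i + 1)) (by omega)
    have he : i + 1 + (t - (i + 1)) = t := by omega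
    rw [he] at this; exact this
  have hfQ_ne : ∀ t, t ≤ i ∨ i + ℓ < t → fsum Q t = fsum P t := by
    intro t ht
    rw [hQmv]
    rcases ht with h2 | h2
    · exact fsum_mv_low hij h2
    · exact fsum_mv_high hij hilen hPi h2
  have hfQ_mid : ∀ t, i < t → t ≤ i + ℓ → fsum Q t + 1 = fsum P t := by
    intro t h1 h2
    rw [hQmv]; exact fsum_mv_mid hij hilen hPi h1 h2
  have hPQ : dyckLE P Q := by
    intro t
    show fsum Q t ≤ fsum P t
    rcases le_or_gt t i with h2 | h2
    · rw [hfQ_ne t (Or.inl h2)]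
    rcases le_or_gt t (i + ℓ) with h3 | h3
    · have := hfQ_mid t h2 h3; omega
    · rw [hfQ_ne t (Or.inr h3)]
  refine ⟨hP, hQ, hPQ, ?_, ?_⟩
  · -- linearity
    intro R S hR hS hPR hRQ hPS hSQ
    have hRb : ∀ t, fsum Q t ≤ fsum R t ∧ fsum R t ≤ fsum P t := fun t => ⟨hRQ t, hPR t⟩
    have hSb : ∀ t, fsum Q t ≤ fsum S t ∧ fsum S t ≤ fsum P t := fun t => ⟨hSQ t, hPS t⟩
    by_cases hRS : dyckLE R S
    · exact Or.inl hRS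
    right
    have : ∃ t0, fsum R t0 < fsum S t0 := by
      by_contra hco
      push_neg at hco
      exact hRS (fun t => hco t)
    obtain ⟨t0, ht0⟩ := this
    have ht0mem : i < t0 ∧ t0 ≤ i + ℓ := by
      by_contra hmem
      have : fsum R t0 = fsum S t0 := by
        have hor : t0 ≤ i ∨ i + ℓ < t0 := by omega
        have := hfQ_ne t0 hor
        have := hRb t0; have := hSb t0; omega
      omega
    intro t
    show fsum R t ≤ fsum S t
    by_contra hco
    push_neg at hco
    have htmem : i < t ∧ t ≤ i + ℓ := by
      by_contra hmem
      have hor : t ≤ i ∨ i + ℓ < t := by omega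
      have := hfQ_ne t hor
      have := hRb t; have := hSb t; omega
    have e1 := hfQ_mid t0 ht0mem.1 ht0mem.2
    have e2 := hfQ_mid t htmem.1 htmem.2
    have ec : fsum P t = fsum P t0 := by
      rw [hconst t (by omega) htmem.2, hconst t0 (by omega) ht0mem.2]
    have hv1 := hRb t0; have hv2 := hSb t0
    have hv3 := hRb t; have hv4 := hSb t
    rcases lt_trichotomy t t0 with hlt | heq | hgt
    · have := fsum_mono R (le_of_lt hlt); omega
    · subst heq; omega
    · have := fsum_mono S (le_of_lt hgt); omega
  · -- the chain
    set c : ℕ → List ℕ := fun k => if k = 0 then P else mv P i (i + min k ℓ) 1 with hc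
    have hcmv : ∀ k, 1 ≤ k → k ≤ ℓ → c k = mv P i (i + k) 1 := by
      intro k h1 h2
      simp only [hc, if_neg (by omega : ¬ k = 0), Nat.min_eq_left h2]
    have hcij : ∀ k, 1 ≤ k → i < i + k := by omega
    have hcne : ∀ k, k ≤ ℓ → ∀ t, t ≤ i ∨ i + k < t → fsum (c k) t = fsum P t := by
      intro k hkl t ht
      rcases Nat.eq_zero_or_pos k with rfl | hpos
      · simp [hc]
      rw [hcmv k hpos hkl]
      rcases ht with h2 | h2
      · exact fsum_mv_low (hcij k hpos) h2
      · exact fsum_mv_high (hcij k hpos) (by omega) hPi h2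
    have hcmid : ∀ k, k ≤ ℓ → ∀ t, i < t → t ≤ i + k → fsum (c k) t + 1 = fsum P t := by
      intro k hkl t h1 h2
      have hpos : 1 ≤ k := by omega
      rw [hcmv k hpos hkl]
      exact fsum_mv_mid (hcij k hpos) (by omega) hPi h1 h2
    have hcnu : ∀ k, k ≤ ℓ → IsNuPath ν (c k) := by
      intro k hkl
      rcases Nat.eq_zero_or_pos k with rfl | hpos
      · simpa [hc] using hP
      rw [hcmv k hpos hkl]
      exact (mv_valid hP (hcij k hpos) (by omega) hPi).1
    have hF1 : 1 ≤ fsum P (i + 1) := by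
      have := fsum_succ (show i < P.length by omega)
      omega
    refine ⟨c, by simp [hc], ?_, ?_⟩
    · rw [hcmv ℓ hl le_rfl, ← hQmv]
    intro k hkl
    have hk1 : k + 1 ≤ ℓ := hkl
    refine ⟨hcnu k (by omega), hcnu (k + 1) hk1, ?_, ?_, ?_⟩
    · intro t
      show fsum (c (k + 1)) t ≤ fsum (c k) t
      rcases le_or_gt t i with h2 | h2
      · rw [hcne k (by omega) t (Or.inl h2), hcne (k + 1) hk1 t (Or.inl h2)]
      rcases le_or_gt t (i + k) with h3 | h3
      · have := hcmid k (by omega) t h2 h3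
        have := hcmid (k + 1) hk1 t h2 (by omega)
        omega
      rcases le_or_gt t (i + k + 1) with h4 | h4
      · have h5 : t = i + k + 1 := by omega
        subst h5
        have := hcne k (by omega) (i + k + 1) (Or.inr (by omega))
        have := hcmid (k + 1) hk1 (i + k + 1) (by omega) (by omega)
        omega
      · rw [hcne k (by omega) t (Or.inr (by omega)), hcne (k + 1) hk1 t (Or.inr (by omega))]
    · intro heq
      have := congrArg (fun l => fsum l (i + k + 1)) heq
      have e1 := hcne k (by omega) (i + k + 1) (Or.inr (by omega))
      have e2 := hcmid (k + 1) hk1 (i + k + 1) (by omega) (by omega)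
      have e3 : fsum P (i + 1) ≤ fsum P (i + k + 1) := fsum_mono P (by omega)
      omega
    · intro R hR h1 h2
      have h1' : ∀ t, fsum R t ≤ fsum (c k) t := h1
      have h2' : ∀ t, fsum (c (k + 1)) t ≤ fsum R t := h2
      have hRlenk : R.length = (c k).length := by rw [hR.1, (hcnu k (by omega)).1]
      have hRne : ∀ t, t ≠ i + k + 1 → fsum R t = fsum (c k) t ∧ fsum R t = fsum (c (k + 1)) t := by
        intro t ht
        have := h1' t; have := h2' t
        rcases le_or_gt t i with hA | hA
        · have := hcne k (by omega) t (Or.inl hA)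
          have := hcne (k + 1) hk1 t (Or.inl hA)
          omega
        rcases le_or_gt t (i + k) with hB | hB
        · have := hcmid k (by omega) t hA hB
          have := hcmid (k + 1) hk1 t hA (by omega)
          omega
        · have hB2 : i + k + 1 < t := by omega
          have := hcne k (by omega) t (Or.inr (by omega))
          have := hcne (k + 1) hk1 t (Or.inr hB2)
          omega
      have hval : fsum R (i + k + 1) = fsum (c k) (i + k + 1) ∨
          fsum R (i + k + 1) = fsum (c (k + 1)) (i + k + 1) := by
        have := h1' (i + k + 1); have := h2' (i + k + 1)
        have := hcne k (by omega) (i + k + 1) (Or.inr (by omega))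
        have := hcmid (k + 1) hk1 (i + k + 1) (by omega) (by omega)
        omega
      rcases hval with hv | hv
      · left
        refine ext_of_fsum hRlenk (fun t => ?_)
        by_cases ht : t = i + k + 1
        · subst ht; exact hv
        · exact (hRne t ht).1
      · right
        refine ext_of_fsum (by rw [hR.1, (hcnu (k + 1) hk1).1]) (fun t => ?_)
        by_cases ht : t = i + k + 1
        · subst ht; exact hv
        · exact (hRne t ht).2


lemma linear_converse {ν P Q : List ℕ} {ℓ : ℕ} (hl : 1 ≤ ℓ) (h : IsDyckLinear ν P Q ℓ) :
    (∃ k, IsLeftDyck ν P Q k) ∨ (∃ k, IsRightDyck ν P Q k) := by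
  obtain ⟨hP, hQ, hPQ, hlin, c, hc0, hcl, hcov⟩ := h
  have hPQ' : ∀ t, fsum Q t ≤ fsum P t := hPQ
  -- P ≠ Q
  have hup : ∀ d, d ≤ ℓ → dyckLE (c (ℓ - d)) Q := by
    intro d
    induction d with
    | zero => intro _; simp only [Nat.sub_zero, hcl]; exact dyckLE_refl Q
    | succ d ih =>
      intro hd
      have h1 : ℓ - (d + 1) < ℓ := by omega
      have h2 := (hcov _ h1).2.2.1
      have he : ℓ - (d + 1) + 1 = ℓ - d := by omega
      rw [he] at h2
      exact dyckLE_trans h2 (ih (by omega))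
  have hne : P ≠ Q := by
    intro heq
    have hcov0 := hcov 0 (by omega)
    rw [hc0] at hcov0
    have h1 : dyckLE P (c 1) := hcov0.2.2.1
    have h2 : dyckLE (c 1) Q := by
      have := hup (ℓ - 1) (by omega)
      rw [show ℓ - (ℓ - 1) = 1 by omega] at this
      exact this
    rw [← heq] at h2
    have : c 1 = P := path_ext hcov0.2.1 hP (fun t => le_antisymm (h1 t) (h2 t))
    exact hcov0.2.2.2.1 this.symm
  clear hup hcov hc0 hcl
  have lenP : P.length = ν.length := hP.1
  have lenQ : Q.length = ν.length := hQ.1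
  have hex : ∃ j, fsum Q j < fsum P j := by
    by_contra hco
    push_neg at hco
    exact hne (path_ext hP hQ (fun t => le_antisymm (hco t) (hPQ' t)))
  have hJbound : ∀ j, fsum Q j < fsum P j → 1 ≤ j ∧ j < ν.length := by
    intro j hj
    constructor
    · rcases Nat.eq_zero_or_pos j with rfl | h; · simp [fsum_zero] at hj
      exact h
    · by_contra hco
      rw [fsum_of_le (by omega), fsum_of_le (by omega), hP.2.2, hQ.2.2] at hj
      omega
  set j₀ := Nat.find hex with hj0def
  have hJ0 : fsum Q j₀ < fsum P j₀ := Nat.find_spec hex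
  have hmin : ∀ m, m < j₀ → ¬ fsum Q m < fsum P m := fun m hm => Nat.find_min hex hm
  set j₁ := Nat.findGreatest (fun j => fsum Q j < fsum P j) ν.length with hj1def
  have hJ1 : fsum Q j₁ < fsum P j₁ :=
    Nat.findGreatest_spec (P := fun j => fsum Q j < fsum P j) (n := ν.length)
      (hJbound j₀ hJ0).2.le hJ0
  have hmax : ∀ m, j₁ < m → ¬ fsum Q m < fsum P m := by
    intro m hm
    by_cases hm2 : m ≤ ν.length
    · exact Nat.findGreatest_is_greatest (P := fun j => fsum Q j < fsum P j) (n := ν.length) hm hm2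
    · intro hj
      exact absurd (hJbound m hj).2 (by omega)
  have h01 : j₀ ≤ j₁ := by
    by_contra hco
    exact hmax j₀ (by omega) hJ0
  have hQP : ∀ t, ¬ fsum Q t < fsum P t → fsum Q t = fsum P t :=
    fun t ht => le_antisymm (hPQ' t) (not_lt.1 ht)
  have h0b := hJbound j₀ hJ0
  have h1b := hJbound j₁ hJ1
  have h0len : j₀ < P.length := by omega
  have h1len : j₁ < P.length := by omega
  -- incomparability engine
  have incomp : ∀ R S, IsNuPath ν R → IsNuPath ν S → dyckLE P R → dyckLE R Q →
      dyckLE P S → dyckLE S Q → ∀ t1 t2, fsum R t1 < fsum S t1 → fsum S t2 < fsum R t2 →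
      False := by
    intro R S h1 h2 h3 h4 h5 h6 t1 t2 ha hb
    rcases hlin R S h1 h2 h3 h4 h5 h6 with hle | hle
    · have h' : fsum S t1 ≤ fsum R t1 := hle t1
      omega
    · have h' : fsum R t2 ≤ fsum S t2 := hle t2
      omega
  -- unique descent
  have hdesc : ∀ j, fsum Q j < fsum P j → j ≠ j₀ → fsum P j = fsum P (j - 1) := by
    intro j hJ hnej
    have hj0lt : j₀ < j := by
      rcases lt_trichotomy j j₀ with h | h | h
      · exact absurd hJ (hmin j h)
      · exact absurd h hnej
      · exact h
    have hjb := hJbound j hJ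
    have hjlen : j < P.length := by omega
    refine le_antisymm ?_ (fsum_mono P (by omega))
    by_contra hco
    push_neg at hco
    -- R = mv P (j₀-1) j₀ 1, S = mv P (j-1) j 1
    have hd0 : j₀ - 1 < j₀ := by omega
    have hg0 : 1 ≤ P.getD (j₀ - 1) 0 := by
      have e1 := fsum_succ (show j₀ - 1 < P.length by omega)
      rw [show j₀ - 1 + 1 = j₀ by omega] at e1
      have e2 := hQP (j₀ - 1) (hmin _ (by omega))
      have e3 := fsum_mono Q (show j₀ - 1 ≤ j₀ by omega)
      omega
    have hgj : 1 ≤ P.getD (j - 1) 0 := by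
      have e1 := fsum_succ (show j - 1 < P.length by omega)
      rw [show j - 1 + 1 = j by omega] at e1
      omega
    obtain ⟨hRnu, hRle⟩ := mv_valid hP hd0 h0len hg0
    obtain ⟨hSnu, hSle⟩ := mv_valid hP (show j - 1 < j by omega) hjlen hgj
    have hRQ : dyckLE (mv P (j₀ - 1) j₀ 1) Q := by
      refine mv_dyckLE_Q hP hQ hPQ hd0 h0len hg0 ?_
      intro t h1 h2
      have : t = j₀ := by omega
      subst this; omega
    have hSQ : dyckLE (mv P (j - 1) j 1) Q := by
      refine mv_dyckLE_Q hP hQ hPQ (show j - 1 < j by omega) hjlen hgj ?_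
      intro t h1 h2
      have : t = j := by omega
      subst this; omega
    refine incomp _ _ hRnu hSnu hRle hRQ hSle hSQ j₀ j ?_ ?_
    · have e1 := fsum_mv_mid hd0 h0len hg0 (show j₀ - 1 < j₀ by omega) le_rfl
      have e2 := fsum_mv_low (show j - 1 < j by omega) (P := P) (k := 1)
        (show j₀ ≤ j - 1 by omega)
      rw [e2]
      omega
    · have e1 := fsum_mv_mid (show j - 1 < j by omega) hjlen hgj
        (show j - 1 < j by omega) le_rfl
      have e2 := fsum_mv_high hd0 h0len hg0 (show j₀ < j by omega) (P := P) (k := 1)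
      rw [e2]
      omega
  -- unique ascent
  have hasc : ∀ j, fsum Q j < fsum P j → j ≠ j₁ → fsum Q (j + 1) = fsum Q j := by
    intro j hJ hnej
    have hjlt : j < j₁ := by
      rcases lt_trichotomy j j₁ with h | h | h
      · exact h
      · exact absurd h hnej
      · exact absurd hJ (hmax j h)
    have hjb := hJbound j hJ
    have hjQlen : j < Q.length := by omega
    refine le_antisymm ?_ (fsum_mono Q (by omega))
    by_contra hco
    push_neg at hco
    have hgj : 1 ≤ Q.getD j 0 := by
      have e1 := fsum_succ hjQlen
      omega
    have hg1 : 1 ≤ Q.getD j₁ 0 := by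
      have e1 := fsum_succ (show j₁ < Q.length by omega)
      have e2 := hQP (j₁ + 1) (hmax _ (by omega))
      have e3 := fsum_mono P (show j₁ ≤ j₁ + 1 by omega)
      omega
    obtain ⟨hRnu, hRP, hRQ⟩ := mvUp_valid hP hQ hPQ (show j - 1 < j by omega) hjQlen hgj
      (by
        intro t h1 h2
        have ht' : t = j := by omega
        subst ht'
        omega)
    obtain ⟨hSnu, hSP, hSQ⟩ := mvUp_valid hP hQ hPQ (show j₁ - 1 < j₁ by omega)
      (show j₁ < Q.length by omega) hg1
      (by
        intro t h1 h2
        have ht' : t = j₁ := by omega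
        subst ht'
        omega)
    refine incomp _ _ hRnu hSnu hRP hRQ hSP hSQ j₁ j ?_ ?_
    · have e1 := fsum_mvUp_high (show j - 1 < j by omega) hjQlen hgj
        (show j < j₁ by omega) (Q := Q)
      have e2 := fsum_mvUp_mid (show j₁ - 1 < j₁ by omega) (show j₁ < Q.length by omega)
        (show j₁ - 1 < j₁ by omega) le_rfl (Q := Q) (k := 1)
      rw [e1, e2]
      omega
    · have e1 := fsum_mvUp_mid (show j - 1 < j by omega) hjQlen
        (show j - 1 < j by omega) le_rfl (Q := Q) (k := 1)
      have e2 := fsum_mvUp_low (show j₁ - 1 < j₁ by omega) (Q := Q) (k := 1)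
        (show j ≤ j₁ - 1 by omega)
      rw [e1, e2]
      omega
  -- J is an interval
  have hdown : ∀ j, fsum Q j < fsum P j → j₀ < j → fsum Q (j - 1) < fsum P (j - 1) := by
    intro j hJ hlt
    by_contra hco
    have e1 := hQP (j - 1) hco
    have e2 := hdesc j hJ (by omega)
    have e3 := fsum_mono Q (show j - 1 ≤ j by omega)
    omega
  have hJint : ∀ j, j₀ ≤ j → j ≤ j₁ → fsum Q j < fsum P j := by
    have key : ∀ d, j₀ ≤ j₁ - d → fsum Q (j₁ - d) < fsum P (j₁ - d) := by
      intro d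
      induction d with
      | zero => intro _; simpa using hJ1
      | succ d ih =>
        intro hd
        have h1 : j₀ ≤ j₁ - d := by omega
        have h2 := ih h1
        have h3 : j₀ < j₁ - d := by omega
        have := hdown _ h2 h3
        rw [show j₁ - d - 1 = j₁ - (d + 1) by omega] at this
        exact this
    intro j h1 h2
    have := key (j₁ - j) (by omega)
    rw [show j₁ - (j₁ - j) = j by omega] at this
    exact this
  -- fsum P and fsum Q constant on [j₀, j₁]
  have hPconst : ∀ j, j₀ ≤ j → j ≤ j₁ → fsum P j = fsum P j₀ := by
    have key : ∀ d, j₀ + d ≤ j₁ → fsum P (j₀ + d) = fsum P j₀ := by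
      intro d
      induction d with
      | zero => intro _; rfl
      | succ d ih =>
        intro hd
        have h1 := hdesc (j₀ + d + 1) (hJint _ (by omega) (by omega)) (by omega)
        rw [show j₀ + d + 1 - 1 = j₀ + d by omega] at h1
        rw [show j₀ + (d + 1) = j₀ + d + 1 by omega, h1]
        exact ih (by omega)
    intro j h1 h2
    have := key (j - j₀) (by omega)
    rw [show j₀ + (j - j₀) = j by omega] at this
    exact this
  have hQconst : ∀ j, j₀ ≤ j → j ≤ j₁ → fsum Q j = fsum Q j₀ := by
    have key : ∀ d, j₀ + d ≤ j₁ → fsum Q (j₀ + d) = fsum Q j₀ := by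
      intro d
      induction d with
      | zero => intro _; rfl
      | succ d ih =>
        intro hd
        have h1 := hasc (j₀ + d) (hJint _ (by omega) (by omega)) (by omega)
        rw [show j₀ + (d + 1) = j₀ + d + 1 by omega, h1]
        exact ih (by omega)
    intro j h1 h2
    have := key (j - j₀) (by omega)
    rw [show j₀ + (j - j₀) = j by omega] at this
    exact this
  -- main case split
  by_cases hcase : j₀ = j₁
  · -- left interval
    left
    set k := fsum P j₀ - fsum Q j₀ with hkdef
    have hk1 : 1 ≤ k := by omega
    have hJonly : ∀ t, t ≠ j₀ → fsum Q t = fsum P t := by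
      intro t ht
      rcases lt_or_gt_of_ne ht with h2 | h2
      · exact hQP t (hmin t h2)
      · exact hQP t (hmax t (by omega))
    have hgd : k ≤ P.getD (j₀ - 1) 0 := by
      have e1 := fsum_succ (show j₀ - 1 < P.length by omega)
      rw [show j₀ - 1 + 1 = j₀ by omega] at e1
      have e2 := hJonly (j₀ - 1) (by omega)
      have e3 := fsum_mono Q (show j₀ - 1 ≤ j₀ by omega)
      omega
    refine ⟨k, hP, hQ, hk1, j₀ - 1, by omega, hgd, ?_⟩
    have h00 : j₀ - 1 + 1 = j₀ := by omega
    have hgoal : Q = mv P (j₀ - 1) (j₀ - 1 + 1) k := by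
      rw [h00]
      refine path_ext hQ (mv_valid hP (by omega) h0len hgd).1 ?_
      intro t
      rcases lt_trichotomy t j₀ with h2 | h2 | h2
      · rw [fsum_mv_low (by omega) (by omega), hJonly t (by omega)]
      · subst h2
        have e1 := fsum_mv_mid (show j₀ - 1 < j₀ by omega) h0len hgd (by omega) le_rfl
        omega
      · rw [fsum_mv_high (by omega) h0len hgd h2, hJonly t (by omega)]
    exact hgoal
  · -- right interval
    right
    have h01' : j₀ < j₁ := by omega
    have hg1 : 1 ≤ P.getD (j₀ - 1) 0 := by
      have e1 := fsum_succ (show j₀ - 1 < P.length by omega)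
      rw [show j₀ - 1 + 1 = j₀ by omega] at e1
      have e2 := hQP (j₀ - 1) (hmin _ (by omega))
      have e3 := fsum_mono Q (show j₀ - 1 ≤ j₀ by omega)
      omega
    have hD1 : fsum P j₀ = fsum Q j₀ + 1 := by
      refine le_antisymm ?_ (by omega)
      by_contra hco
      push_neg at hco
      have hg2 : 2 ≤ P.getD (j₀ - 1) 0 := by
        have e1 := fsum_succ (show j₀ - 1 < P.length by omega)
        rw [show j₀ - 1 + 1 = j₀ by omega] at e1
        have e2 := hQP (j₀ - 1) (hmin _ (by omega))
        have e3 := fsum_mono Q (show j₀ - 1 ≤ j₀ by omega)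
        omega
      obtain ⟨hRnu, hRle⟩ := mv_valid hP (show j₀ - 1 < j₀ by omega) h0len hg2
      obtain ⟨hSnu, hSle⟩ := mv_valid hP (show j₀ - 1 < j₁ by omega) h1len hg1
      have hRQ : dyckLE (mv P (j₀ - 1) j₀ 2) Q := by
        refine mv_dyckLE_Q hP hQ hPQ (by omega) h0len hg2 ?_
        intro t ha hb
        have ht' : t = j₀ := by omega
        subst ht'
        omega
      have hSQ : dyckLE (mv P (j₀ - 1) j₁ 1) Q := by
        refine mv_dyckLE_Q hP hQ hPQ (by omega) h1len hg1 ?_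
        intro t ha hb
        have := hJint t (by omega) hb
        omega
      refine incomp _ _ hRnu hSnu hRle hRQ hSle hSQ j₀ j₁ ?_ ?_
      · have e1 := fsum_mv_mid (show j₀ - 1 < j₀ by omega) h0len hg2 (by omega) le_rfl
        have e2 := fsum_mv_mid (show j₀ - 1 < j₁ by omega) h1len hg1 (by omega)
          (show j₀ ≤ j₁ by omega)
        omega
      · have e1 := fsum_mv_high (show j₀ - 1 < j₀ by omega) h0len hg2
          (show j₀ < j₁ by omega) (P := P)
        have e2 := fsum_mv_mid (show j₀ - 1 < j₁ by omega) h1len hg1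
          (show j₀ - 1 < j₁ by omega) le_rfl
        omega
    have hDall : ∀ t, j₀ ≤ t → t ≤ j₁ → fsum P t = fsum Q t + 1 := by
      intro t ha hb
      rw [hPconst t ha hb, hQconst t ha hb, hD1]
    refine ⟨j₁ - j₀ + 1, hP, hQ, by omega, j₀ - 1, ?_, hg1, ?_, ?_⟩
    · rw [show j₀ - 1 + (j₁ - j₀ + 1) = j₁ by omega]
      exact h1len
    · intro t ha hb
      have e1 := fsum_succ (show t < P.length by omega)
      have e2 := hPconst t (by omega) (by omega)
      have e3 := hPconst (t + 1) (by omega) (by omega)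
      omega
    · have hgoal : Q = mv P (j₀ - 1) (j₀ - 1 + (j₁ - j₀ + 1)) 1 := by
        rw [show j₀ - 1 + (j₁ - j₀ + 1) = j₁ by omega]
        refine path_ext hQ (mv_valid hP (show j₀ - 1 < j₁ by omega) h1len hg1).1 ?_
        intro t
        rcases le_or_gt t (j₀ - 1) with h2 | h2
        · rw [fsum_mv_low (show j₀ - 1 < j₁ by omega) h2, hQP t (hmin t (by omega))]
        rcases le_or_gt t j₁ with h3 | h3
        · have e1 := fsum_mv_mid (show j₀ - 1 < j₁ by omega) h1len hg1 h2 h3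
          have e2 := hDall t (by omega) h3
          omega
        · rw [fsum_mv_high (show j₀ - 1 < j₁ by omega) h1len hg1 h3, hQP t (hmax t h3)]
      exact hgoal

end DyckAux


/-- In the ν-Dyck lattice, every left interval and every right
interval of parameter `ℓ` is a linear interval of length `ℓ`, and conversely
every nontrivial linear interval is either a left interval or a right interval. -/
theorem dyck_left_right_are_linear_and_conversely (ν : List ℕ) (hν : ν ≠ []) :
    (∀ P Q ℓ, IsLeftDyck ν P Q ℓ → IsDyckLinear ν P Q ℓ) ∧
    (∀ P Q ℓ, IsRightDyck ν P Q ℓ → IsDyckLinear ν P Q ℓ) ∧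
    (∀ P Q ℓ, 1 ≤ ℓ → IsDyckLinear ν P Q ℓ →
      (∃ k, IsLeftDyck ν P Q k) ∨ ∃ k, IsRightDyck ν P Q k) :=
  ⟨fun _ _ _ h => DyckAux.left_to_linear h, fun _ _ _ h => DyckAux.right_to_linear h,
    fun _ _ _ hl h => DyckAux.linear_converse hl h⟩
end

section
/- Let ν be a lattice path and ℓ ≥ 1. The number of left intervals of length ℓ in the ν-Dyck lattice D(ν) equals the number of pairs (P, s) where P is a ν-path and s is a north step of P immediately preceded by at least ℓ consecutive east steps; the number of right intervals of length ℓ in D(ν) equals the number of pairs (P, s) where P is a ν-path and s is an east step of P immediately followed by at least ℓ consecutive north steps. -/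
theorem takeSum : ∀ (L : List ℕ) (j : ℕ),
    (L.take j).sum = ∑ t ∈ Finset.range j, L.getD t 0
  | _, 0 => by simp
  | [], j => by simp [List.getD]
  | a :: L, j + 1 => by
      rw [Finset.sum_range_succ']
      simp only [List.take_succ_cons, List.sum_cons, List.getD_cons_succ, List.getD_cons_zero,
        takeSum L j]
      omega

theorem getD_set_set (L : List ℕ) (i k b c : ℕ) (hik : i ≠ k) (hi : i < L.length)
    (hk : k < L.length) (t : ℕ) :
    ((L.set i b).set k c).getD t 0 = if t = k then c else if t = i then b else L.getD t 0 := by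
  rcases eq_or_ne t k with rfl | htk
  · simp [List.getD_eq_getElem?_getD, List.getElem?_set_self, hk]
  · rw [List.getD_eq_getElem?_getD, List.getElem?_set_ne (Ne.symm htk),
      ← List.getD_eq_getElem?_getD]
    rcases eq_or_ne t i with rfl | hti
    · simp [List.getD_eq_getElem?_getD, List.getElem?_set_self, hi, hik, htk]
    · rw [List.getD_eq_getElem?_getD, List.getElem?_set_ne (Ne.symm hti),
        ← List.getD_eq_getElem?_getD]
      simp [htk, hti]

theorem sum_set_set (L : List ℕ) (i k a : ℕ) (hik : i < k) (hk : k < L.length)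
    (ha : a ≤ L.getD i 0) (j : ℕ) :
    (((L.set i (L.getD i 0 - a)).set k (L.getD k 0 + a)).take j).sum
      + (if i < j ∧ j ≤ k then a else 0) = (L.take j).sum := by
  have hi : i < L.length := hik.trans hk
  have hQ := getD_set_set L i k (L.getD i 0 - a) (L.getD k 0 + a) hik.ne hi hk
  rw [takeSum, takeSum]
  induction j with
  | zero => simp
  | succ j ih =>
    rw [Finset.sum_range_succ, Finset.sum_range_succ, hQ j]
    clear hQ
    rcases eq_or_ne j k with rfl | hjk
    · rw [if_pos rfl]; split_ifs at * <;> omega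
    · rw [if_neg hjk]
      rcases eq_or_ne j i with rfl | hji
      · rw [if_pos rfl]; split_ifs at * <;> omega
      · rw [if_neg hji]; split_ifs at * <;> omega

theorem isNuPath_shift (ν L : List ℕ) (hL : IsNuPath ν L) (i k a : ℕ) (hik : i < k)
    (hk : k < L.length) (ha : a ≤ L.getD i 0) :
    IsNuPath ν ((L.set i (L.getD i 0 - a)).set k (L.getD k 0 + a)) := by
  obtain ⟨h1, h2, h3⟩ := hL
  refine ⟨by simpa using h1, fun j => ?_, ?_⟩
  · have h4 := sum_set_set L i k a hik hk ha j
    have h5 := h2 j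
    omega
  · have h4 := sum_set_set L i k a hik hk ha L.length
    have hite : ¬ (i < L.length ∧ L.length ≤ k) := by omega
    rw [if_neg hite, add_zero, List.take_length,
      show L.length = ((L.set i (L.getD i 0 - a)).set k (L.getD k 0 + a)).length by simp,
      List.take_length] at h4
    omega

theorem shift_inj_aux (P : List ℕ) (i i' k k' a a' : ℕ) (hii : i < i') (hik : i < k)
    (hk : k < P.length) (hik' : i' < k') (hk' : k' < P.length) (ha : 1 ≤ a)
    (haP : a ≤ P.getD i 0)
    (heq : (P.set i (P.getD i 0 - a)).set k (P.getD k 0 + a)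
      = (P.set i' (P.getD i' 0 - a')).set k' (P.getD k' 0 + a')) : False := by
  have h1 := congrArg (fun L => L.getD i 0) heq
  rw [getD_set_set P i k _ _ hik.ne (hik.trans hk) hk i,
    getD_set_set P i' k' _ _ hik'.ne (hik'.trans hk') hk' i,
    if_neg (by omega), if_pos rfl, if_neg (by omega), if_neg (by omega)] at h1
  omega

theorem shift_inj (P : List ℕ) (i i' k k' a a' : ℕ) (hik : i < k)
    (hk : k < P.length) (hik' : i' < k') (hk' : k' < P.length) (ha : 1 ≤ a)
    (haP : a ≤ P.getD i 0) (ha' : 1 ≤ a') (haP' : a' ≤ P.getD i' 0)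
    (heq : (P.set i (P.getD i 0 - a)).set k (P.getD k 0 + a)
      = (P.set i' (P.getD i' 0 - a')).set k' (P.getD k' 0 + a')) : i = i' := by
  rcases lt_trichotomy i i' with h | h | h
  · exact (shift_inj_aux P i i' k k' a a' h hik hk hik' hk' ha haP heq).elim
  · exact h
  · exact (shift_inj_aux P i' i k' k a' a h hik' hk' hik hk ha' haP' heq.symm).elim

/-- The number of left intervals of length `ℓ` in `D(ν)` equals
the number of pairs `(P, s)` of a ν-path `P` with a north step `s` immediately
preceded by at least `ℓ` consecutive east steps; the number of right intervals
of length `ℓ` equals the number of pairs `(P, s)` of a ν-path `P` with an east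
step `s` immediately followed by at least `ℓ` consecutive north steps.
(A north step is encoded by the index `i` of the block just before it, and a
marked east step by the index `i` of the block whose last east step it is.) -/
theorem dyck_left_right_interval_count (ν : List ℕ) (hν : ν ≠ []) (ℓ : ℕ) (hℓ : 1 ≤ ℓ) :
    ({PQ : List ℕ × List ℕ | IsLeftDyck ν PQ.1 PQ.2 ℓ}.ncard =
      {Ps : List ℕ × ℕ | IsNuPath ν Ps.1 ∧ Ps.2 + 1 < Ps.1.length ∧
        ℓ ≤ Ps.1.getD Ps.2 0}.ncard) ∧
    ({PQ : List ℕ × List ℕ | IsRightDyck ν PQ.1 PQ.2 ℓ}.ncard =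
      {Ps : List ℕ × ℕ | IsNuPath ν Ps.1 ∧ Ps.2 + ℓ < Ps.1.length ∧
        1 ≤ Ps.1.getD Ps.2 0 ∧
        ∀ j, Ps.2 < j → j < Ps.2 + ℓ → Ps.1.getD j 0 = 0}.ncard) := by
  constructor
  · have hset : {PQ : List ℕ × List ℕ | IsLeftDyck ν PQ.1 PQ.2 ℓ} =
        (fun x : List ℕ × ℕ =>
          (x.1, (x.1.set x.2 (x.1.getD x.2 0 - ℓ)).set (x.2 + 1) (x.1.getD (x.2 + 1) 0 + ℓ))) ''
        {Ps : List ℕ × ℕ | IsNuPath ν Ps.1 ∧ Ps.2 + 1 < Ps.1.length ∧ ℓ ≤ Ps.1.getD Ps.2 0} := by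
      ext ⟨P, Q⟩
      constructor
      · rintro ⟨hP, hQ, -, i, hi, hl, hQeq⟩
        exact ⟨(P, i), ⟨hP, hi, hl⟩, congrArg (Prod.mk P) hQeq.symm⟩
      · rintro ⟨⟨P', i⟩, ⟨hP, hi, hl⟩, heq⟩
        simp only [Prod.mk.injEq] at heq
        obtain ⟨rfl, rfl⟩ := heq
        exact ⟨hP, isNuPath_shift ν P' hP i (i + 1) ℓ (Nat.lt_succ_self i) hi hl, hℓ,
          i, hi, hl, rfl⟩
    rw [hset]
    apply Set.ncard_image_of_injOn
    rintro ⟨P, i⟩ ⟨hP, hi, hl⟩ ⟨P', i'⟩ ⟨hP', hi', hl'⟩ heq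
    simp only [Prod.mk.injEq] at heq ⊢
    obtain ⟨rfl, heq2⟩ := heq
    exact ⟨rfl, shift_inj P i i' (i + 1) (i' + 1) ℓ ℓ (Nat.lt_succ_self i) hi
      (Nat.lt_succ_self i') hi' hℓ hl hℓ hl' heq2⟩
  · have hset : {PQ : List ℕ × List ℕ | IsRightDyck ν PQ.1 PQ.2 ℓ} =
        (fun x : List ℕ × ℕ =>
          (x.1, (x.1.set x.2 (x.1.getD x.2 0 - 1)).set (x.2 + ℓ) (x.1.getD (x.2 + ℓ) 0 + 1))) ''
        {Ps : List ℕ × ℕ | IsNuPath ν Ps.1 ∧ Ps.2 + ℓ < Ps.1.length ∧ 1 ≤ Ps.1.getD Ps.2 0 ∧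
          ∀ j, Ps.2 < j → j < Ps.2 + ℓ → Ps.1.getD j 0 = 0} := by
      ext ⟨P, Q⟩
      constructor
      · rintro ⟨hP, hQ, -, i, hi, h1, hz, hQeq⟩
        exact ⟨(P, i), ⟨hP, hi, h1, hz⟩, congrArg (Prod.mk P) hQeq.symm⟩
      · rintro ⟨⟨P', i⟩, ⟨hP, hi, h1, hz⟩, heq⟩
        simp only [Prod.mk.injEq] at heq
        obtain ⟨rfl, rfl⟩ := heq
        exact ⟨hP, isNuPath_shift ν P' hP i (i + ℓ) 1 (by omega) hi h1, hℓ,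
          i, hi, h1, hz, rfl⟩
    rw [hset]
    apply Set.ncard_image_of_injOn
    rintro ⟨P, i⟩ ⟨hP, hi, h1, -⟩ ⟨P', i'⟩ ⟨hP', hi', h1', -⟩ heq
    simp only [Prod.mk.injEq] at heq ⊢
    obtain ⟨rfl, heq2⟩ := heq
    exact ⟨rfl, shift_inj P i i' (i + ℓ) (i' + ℓ) 1 1 (by omega) hi (by omega) hi'
      le_rfl h1 le_rfl h1' heq2⟩
end

section
/- Let ν = (ν_0, …, ν_n) be a lattice path, δ an increment vector for ν, and define ν̌ = (ν̌_0, δ_1, …, δ_n) with ν̌_0 = Σ_{i=0}^n ν_i − Σ_{i=1}^n δ_i. Then ν̌ is a lattice path with the same endpoints as ν lying weakly below ν, i.e. Σ_{i=0}^j ν_i ≤ Σ_{i=0}^j ν̌_i for all 0 ≤ j ≤ n with equality for j = n. Moreover, for every ν-path μ (which is then also a ν̌-path), the δ-rotations of μ coincide with the ν̌-rotations of μ, i.e. the δ-rotation of μ at a valley equals the rotation at that valley taken with respect to the increment vector (ν̌_1, …, ν̌_n) = (δ_1, …, δ_n) viewed over ν̌. -/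
lemma sum_take_eq_range' (l : List ℕ) (n : ℕ) :
    (l.take n).sum = ∑ t ∈ Finset.range n, l.getD t 0 := by
  induction n with
  | zero => simp
  | succ n ih =>
    rw [Finset.sum_range_succ, ← ih, List.take_succ]
    cases h : l[n]? <;> simp [List.getD_eq_getElem?_getD, h]

lemma take_sum_add' (l : List ℕ) {a b : ℕ} (h : a ≤ b) :
    (l.take b).sum = (l.take a).sum + ∑ t ∈ Finset.Ico a b, l.getD t 0 := by
  rw [sum_take_eq_range', sum_take_eq_range', Finset.range_eq_Ico, Finset.range_eq_Ico]
  exact (Finset.sum_Ico_consecutive (fun t => l.getD t 0) (Nat.zero_le a) h).symm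

lemma sum_Ico_shift' (f : ℕ → ℕ) (a b : ℕ) :
    ∑ t ∈ Finset.Ico (a+1) (b+1), f t = ∑ t ∈ Finset.Ico a b, f (t+1) := by
  rw [Finset.sum_Ico_eq_sum_range, Finset.sum_Ico_eq_sum_range]
  simp only [Nat.succ_sub_succ]
  exact Finset.sum_congr rfl fun i _ => by congr 1; omega

/-- The path ν̌ = (ν̌_0, δ_1, …, δ_n), with
ν̌_0 = Σν_i − Σδ_i, is a lattice path with the same endpoints as `ν` lying
weakly below `ν` (i.e. `ν` is a ν̌-path).  Moreover, for every ν-path `μ`, the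
δ-rotations of `μ` coincide with the ν̌-rotations of `μ`. -/
theorem nuCheck_below_and_rotations_coincide (ν δ : List ℕ) (hν : ν ≠ [])
    (hδ : IsIncrement ν δ) :
    IsNuPath (nuCheck ν δ) ν ∧
    ∀ μ μ' : List ℕ, IsNuPath ν μ →
      ∀ i, (IsDeltaRotation δ μ μ' i ↔ IsNuRotation (nuCheck ν δ) μ μ' i) := by
  obtain ⟨hlen, hδ2⟩ := hδ
  have hN1 : 1 ≤ ν.length := List.length_pos_iff.mpr hν
  have hsum : ∀ a, ∑ t ∈ Finset.Ico a δ.length, δ.getD t 0 ≤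
      ∑ t ∈ Finset.Ico (a+1) ν.length, ν.getD t 0 := by
    intro a
    rw [← hlen, sum_Ico_shift']
    exact Finset.sum_le_sum fun t ht => hδ2 t (Finset.mem_Ico.mp ht).2
  have hkey : ∀ a, (ν.take (a+1)).sum + δ.sum ≤ ν.sum + (δ.take a).sum := by
    intro a
    rcases le_or_gt δ.length a with h | h
    · rw [List.take_of_length_le h, List.take_of_length_le (by omega)]
    · have e1 : δ.sum = (δ.take a).sum + ∑ t ∈ Finset.Ico a δ.length, δ.getD t 0 := by
        conv_lhs => rw [← List.take_length (l := δ)]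
        exact take_sum_add' δ h.le
      have e2 : ν.sum = (ν.take (a+1)).sum + ∑ t ∈ Finset.Ico (a+1) ν.length, ν.getD t 0 := by
        conv_lhs => rw [← List.take_length (l := ν)]
        exact take_sum_add' ν (by omega)
      have := hsum a
      omega
  have hδν : δ.sum ≤ ν.sum := by
    have h0 := hkey 0
    simp at h0
    omega
  have expand : ∀ a b : ℕ, a ≤ b →
      ((nuCheck ν δ).take (b+1)).sum =
        ((nuCheck ν δ).take (a+1)).sum + ∑ t ∈ Finset.Ico a b, δ.getD t 0 := by
    intro a b hab
    rw [take_sum_add' (nuCheck ν δ) (Nat.succ_le_succ hab), sum_Ico_shift']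
    simp [nuCheck]
  refine ⟨⟨by simp [nuCheck, ← hlen], ?_, by simp [nuCheck]; omega⟩, ?_⟩
  · intro j
    cases j with
    | zero => simp
    | succ a =>
      have h2 : ((nuCheck ν δ).take (a+1)).sum = (ν.sum - δ.sum) + (δ.take a).sum := by
        simp [nuCheck]
      rw [h2]
      have := hkey a
      omega
  · intro μ μ' hμ i
    unfold IsDeltaRotation IsNuRotation
    refine and_congr_right fun hi => and_congr_right fun h1 => exists_congr fun k =>
      and_congr_right fun hik => and_congr_right fun hk => ?_
    have expμ : ∀ a b : ℕ, a ≤ b →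
        (μ.take (b+1)).sum = (μ.take (a+1)).sum + ∑ t ∈ Finset.Ico (a+1) (b+1), μ.getD t 0 :=
      fun a b hab => take_sum_add' μ (Nat.succ_le_succ hab)
    refine and_congr ?_ (and_congr ?_ Iff.rfl)
    · rw [expand i k hik.le, expμ i k hik.le]
      omega
    · refine forall_congr' fun k' => ?_
      refine imp_congr_right fun h1' => imp_congr_right fun h2' => ?_
      rw [expand i k' h1'.le, expμ i k' h1'.le]
      omega
end

section
/- Let ν = (ν_0, …, ν_n) be a lattice path, δ an increment vector for ν, and ν̌ = (ν̌_0, δ_1, …, δ_n) with ν̌_0 = Σ_{i=0}^n ν_i − Σ_{i=1}^n δ_i. Then the alt ν-Tamari poset T_ν(δ) equals the interval [ν, 1^ν] in the ν̌-Tamari lattice Tam(ν̌), where 1^ν = N^n E^m is the top path. Precisely: a ν̌-path μ satisfies ν ≤ μ in Tam(ν̌) if and only if μ is a ν-path (lies weakly above ν), and for ν-paths P, Q one has P ≤ Q in T_ν(δ) if and only if P ≤ Q in Tam(ν̌). -/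
namespace AltTam

def S (l : List ℕ) (j : ℕ) : ℕ := ∑ t ∈ Finset.range j, l.getD t 0

lemma take_sum_eq (l : List ℕ) (j : ℕ) : (l.take j).sum = S l j := by
  induction l generalizing j with
  | nil => simp [S]
  | cons a tl ih =>
    cases j with
    | zero => simp [S]
    | succ j =>
      simp only [List.take_succ_cons, List.sum_cons, ih, S, Finset.sum_range_succ']
      simp [List.getD_cons_succ, List.getD_cons_zero, Nat.add_comm]

lemma S_of_le {l : List ℕ} {j : ℕ} (h : l.length ≤ j) : S l j = l.sum := by
  rw [← take_sum_eq, List.take_of_length_le h]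

lemma getD_set (l : List ℕ) (i v t : ℕ) (hi : i < l.length) :
    (l.set i v).getD t 0 = if t = i then v else l.getD t 0 := by
  rw [List.getD_eq_getElem?_getD, List.getD_eq_getElem?_getD, List.getElem?_set]
  rcases eq_or_ne t i with rfl | h
  · simp [hi]
  · simp [Ne.symm h, h]

lemma eq_of_getD {l₁ l₂ : List ℕ} (h : l₁.length = l₂.length)
    (hg : ∀ t, t < l₁.length → l₁.getD t 0 = l₂.getD t 0) : l₁ = l₂ := by
  apply List.ext_getElem h
  intro t h1 h2
  have := hg t h1
  rwa [List.getD_eq_getElem l₁ 0 h1, List.getD_eq_getElem l₂ 0 h2] at this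

lemma S_set (l : List ℕ) (i v : ℕ) (hi : i < l.length) (j : ℕ) :
    S (l.set i v) j + (if i < j then l.getD i 0 else 0)
      = S l j + (if i < j then v else 0) := by
  unfold S
  rcases lt_or_ge i j with h | h
  · have hmem : i ∈ Finset.range j := Finset.mem_range.2 h
    rw [if_pos h, if_pos h,
      ← Finset.add_sum_erase _ _ hmem, ← Finset.add_sum_erase _ _ hmem]
    have : ∀ t ∈ (Finset.range j).erase i, (l.set i v).getD t 0 = l.getD t 0 := by
      intro t ht
      rw [getD_set l i v t hi, if_neg (Finset.ne_of_mem_erase ht)]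
    rw [Finset.sum_congr rfl this, getD_set l i v i hi, if_pos rfl]
    ring
  · rw [if_neg (by omega), if_neg (by omega)]
    simp only [add_zero]
    apply Finset.sum_congr rfl
    intro t ht
    rw [getD_set l i v t hi, if_neg (by have := Finset.mem_range.1 ht; omega)]

lemma S_move (l : List ℕ) (a b va vb : ℕ) (hab : a ≠ b) (ha : a < l.length)
    (hb : b < l.length) (j : ℕ) :
    S ((l.set a va).set b vb) j + (if a < j then l.getD a 0 else 0)
        + (if b < j then l.getD b 0 else 0)
      = S l j + (if a < j then va else 0) + (if b < j then vb else 0) := by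
  have h1 := S_set (l.set a va) b vb (by rwa [List.length_set]) j
  have h2 := S_set l a va ha j
  have h3 : (l.set a va).getD b 0 = l.getD b 0 := by
    rw [getD_set l a va b ha, if_neg (Ne.symm hab)]
  rw [h3] at h1
  omega

lemma sum_split (f : ℕ → ℕ) {a b : ℕ} (h : a ≤ b) :
    ∑ t ∈ Finset.range a, f t + ∑ t ∈ Finset.Ico a b, f t = ∑ t ∈ Finset.range b, f t := by
  rw [Finset.range_eq_Ico, Finset.range_eq_Ico]
  exact Finset.sum_Ico_consecutive f (Nat.zero_le a) h

/-- The key sum identities, stated with raw sums so `omega` can use them. -/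
lemma S_Mm (μ : List ℕ) {i k : ℕ} (h : i ≤ k) :
    S μ (i + 1) + ∑ t ∈ Finset.Ico (i + 1) (k + 1), μ.getD t 0 = S μ (k + 1) :=
  sum_split _ (by omega)

lemma S_Dd (δ : List ℕ) {i k : ℕ} (h : i ≤ k) :
    S δ i + ∑ t ∈ Finset.Ico i k, δ.getD t 0 = S δ k :=
  sum_split _ h

lemma Dd_le {ν δ : List ℕ} (hδ : IsIncrement ν δ) {i k : ℕ} (hk : k ≤ δ.length) :
    ∑ t ∈ Finset.Ico i k, δ.getD t 0 ≤ ∑ t ∈ Finset.Ico (i + 1) (k + 1), ν.getD t 0 := by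
  calc ∑ t ∈ Finset.Ico i k, δ.getD t 0 ≤ ∑ t ∈ Finset.Ico i k, ν.getD (t + 1) 0 := by
        apply Finset.sum_le_sum
        intro t ht
        have := Finset.mem_Ico.1 ht
        exact hδ.2 t (by omega)
    _ = ∑ t ∈ Finset.Ico (i + 1) (k + 1), ν.getD t 0 := by
        rw [Finset.sum_Ico_eq_sum_range, Finset.sum_Ico_eq_sum_range]
        have he : k + 1 - (i + 1) = k - i := by omega
        rw [he]
        apply Finset.sum_congr rfl
        intro x _
        have he2 : i + x + 1 = i + 1 + x := by omega
        rw [he2]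

lemma take_nuCheck (ν δ : List ℕ) (j : ℕ) :
    ((nuCheck ν δ).take (j + 1)).sum = (ν.sum - δ.sum) + S δ j := by
  simp [nuCheck, List.take_succ_cons, take_sum_eq]

/-- δ-rotations and ν̌-rotations are the same relation. -/
lemma rot_iff (ν δ P Q : List ℕ) :
    DRot δ P Q ↔ ∃ i, IsNuRotation (nuCheck ν δ) P Q i := by
  have conv1 : ∀ i k : ℕ, i < k →
      ((((nuCheck ν δ).take (k + 1)).sum + (P.take (i + 1)).sum ≤
        ((nuCheck ν δ).take (i + 1)).sum + (P.take (k + 1)).sum) ↔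
      ((∑ t ∈ Finset.Ico i k, δ.getD t 0) ≤ ∑ t ∈ Finset.Ico (i + 1) (k + 1), P.getD t 0)) := by
    intro i k hik
    rw [take_nuCheck, take_nuCheck, take_sum_eq, take_sum_eq]
    have e1 := S_Dd δ hik.le
    have e2 := S_Mm P hik.le
    omega
  constructor
  · rintro ⟨i, h1, h2, k, hik, hk, hle, hlt, rfl⟩
    exact ⟨i, h1, h2, k, hik, hk, (conv1 i k hik).2 hle,
      fun k' ha hb => by
        have := hlt k' ha hb
        have h3 := (conv1 i k' ha)
        omega, rfl⟩
  · rintro ⟨i, h1, h2, k, hik, hk, hle, hlt, rfl⟩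
    exact ⟨i, h1, h2, k, hik, hk, (conv1 i k hik).1 hle,
      fun k' ha hb => by
        have := hlt k' ha hb
        have h3 := (conv1 i k' ha)
        omega, rfl⟩

lemma altLE_iff_tamLE (ν δ P Q : List ℕ) :
    altLE δ P Q ↔ tamLE (nuCheck ν δ) P Q := by
  constructor
  · exact Relation.ReflTransGen.mono (fun a b hab => (rot_iff ν δ a b).1 hab) P Q
  · exact Relation.ReflTransGen.mono (fun a b hab => (rot_iff ν δ a b).2 hab) P Q

/-- A δ-rotation preserves being a ν-path. -/
lemma pres {ν δ : List ℕ} {P Q : List ℕ} (hP : IsNuPath ν P) (h : DRot δ P Q) :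
    IsNuPath ν Q := by
  obtain ⟨i, h1, h2, k, hik, hk, _, _, rfl⟩ := h
  obtain ⟨hlen, hab, hsum⟩ := hP
  have hiL : i < P.length := by omega
  have hSQ : ∀ j, S ((P.set i (P.getD i 0 - 1)).set k (P.getD k 0 + 1)) j
      + (if i < j ∧ j ≤ k then 1 else 0) = S P j := by
    intro j
    have := S_move P i k (P.getD i 0 - 1) (P.getD k 0 + 1) (by omega) hiL hk j
    split_ifs at this ⊢ <;> omega
  refine ⟨by simp [hlen], fun j => ?_, ?_⟩
  · rw [take_sum_eq, take_sum_eq]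
    have := hSQ j
    have h4 := hab j
    rw [take_sum_eq, take_sum_eq] at h4
    omega
  · have hL : ((P.set i (P.getD i 0 - 1)).set k (P.getD k 0 + 1)).length = P.length := by simp
    have hq1 := hSQ P.length
    rw [if_neg (by omega)] at hq1
    have hq2 : S ((P.set i (P.getD i 0 - 1)).set k (P.getD k 0 + 1)) P.length
        = ((P.set i (P.getD i 0 - 1)).set k (P.getD k 0 + 1)).sum := by
      rw [← hL]; exact S_of_le le_rfl
    have hq3 : S P P.length = P.sum := S_of_le le_rfl
    omega

lemma nuPath_self (ν : List ℕ) : IsNuPath ν ν := ⟨rfl, fun _ => le_rfl, rfl⟩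

lemma altLE_path {ν δ μ : List ℕ} (h : altLE δ ν μ) : IsNuPath ν μ := by
  induction h with
  | refl => exact nuPath_self ν
  | tail _ hstep ih => exact pres ih hstep

/-- Key step: any ν-path other than ν has a δ-rotation predecessor
which is a ν-path strictly closer to ν. -/
lemma key {ν δ : List ℕ} (hδ : IsIncrement ν δ) {μ : List ℕ}
    (hμ : IsNuPath ν μ) (hne : μ ≠ ν) :
    ∃ μ', IsNuPath ν μ' ∧ DRot δ μ' μ ∧ (∀ j, S μ j ≤ S μ' j) ∧
      ∃ j < ν.length, S μ j < S μ' j := by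
  classical
  obtain ⟨hlen, habove', hsum⟩ := hμ
  have hab : ∀ j, S μ j ≤ S ν j := fun j => by
    rw [← take_sum_eq, ← take_sum_eq]; exact habove' j
  have hL : δ.length + 1 = ν.length := hδ.1
  -- a strict deviation exists
  have hex : ∃ j, S μ j < S ν j := by
    by_contra hcon
    push_neg at hcon
    refine hne (eq_of_getD hlen (fun t ht => ?_))
    have h1 : S μ t = S ν t := le_antisymm (hab t) (hcon t)
    have h2 : S μ (t + 1) = S ν (t + 1) := le_antisymm (hab _) (hcon _)
    have e1 : S μ (t + 1) = S μ t + μ.getD t 0 := Finset.sum_range_succ _ t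
    have e2 : S ν (t + 1) = S ν t + ν.getD t 0 := Finset.sum_range_succ _ t
    omega
  obtain ⟨j₀, hj₀⟩ := hex
  have hj₀1 : 1 ≤ j₀ := by
    rcases Nat.eq_zero_or_pos j₀ with rfl | h
    · simp [S] at hj₀
    · exact h
  obtain ⟨i₀, rfl⟩ : ∃ i₀, j₀ = i₀ + 1 := ⟨j₀ - 1, by omega⟩
  have hi₀n : i₀ < δ.length := by
    by_contra h
    push_neg at h
    have h1 : S μ (i₀ + 1) = μ.sum := S_of_le (by omega)
    have h2 : S ν (i₀ + 1) = ν.sum := S_of_le (by omega)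
    omega
  -- witness for the minimal k
  have hPkn : i₀ < δ.length ∧
      (∑ t ∈ Finset.Ico i₀ δ.length, δ.getD t 0) + 1 ≤
        ∑ t ∈ Finset.Ico (i₀ + 1) (δ.length + 1), μ.getD t 0 := by
    refine ⟨hi₀n, ?_⟩
    have h1 := S_Mm μ (le_of_lt hi₀n)
    have h2 : S ν (i₀ + 1) + ∑ t ∈ Finset.Ico (i₀ + 1) (δ.length + 1), ν.getD t 0
        = S ν (δ.length + 1) := sum_split _ (by omega)
    have h3 := Dd_le hδ (i := i₀) (le_refl δ.length)
    have h4 : S μ (δ.length + 1) = μ.sum := S_of_le (by omega)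
    have h5 : S ν (δ.length + 1) = ν.sum := S_of_le (by omega)
    omega
  have hkex : ∃ k, i₀ < k ∧
      (∑ t ∈ Finset.Ico i₀ k, δ.getD t 0) + 1 ≤
        ∑ t ∈ Finset.Ico (i₀ + 1) (k + 1), μ.getD t 0 := ⟨δ.length, hPkn⟩
  obtain ⟨k, ⟨hi₀k, hkineq⟩, hkn, hkmin0⟩ :
      ∃ k, (i₀ < k ∧
        (∑ t ∈ Finset.Ico i₀ k, δ.getD t 0) + 1 ≤
          ∑ t ∈ Finset.Ico (i₀ + 1) (k + 1), μ.getD t 0) ∧ k ≤ δ.length ∧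
        ∀ j, j < k → ¬(i₀ < j ∧
          (∑ t ∈ Finset.Ico i₀ j, δ.getD t 0) + 1 ≤
            ∑ t ∈ Finset.Ico (i₀ + 1) (j + 1), μ.getD t 0) :=
    ⟨Nat.find hkex, Nat.find_spec hkex, Nat.find_min' hkex hPkn,
      fun j hj => Nat.find_min hkex hj⟩
  have hkmin : ∀ j, i₀ ≤ j → j < k →
      (∑ t ∈ Finset.Ico (i₀ + 1) (j + 1), μ.getD t 0) ≤ ∑ t ∈ Finset.Ico i₀ j, δ.getD t 0 := by
    intro j h1 h2
    rcases eq_or_lt_of_le h1 with rfl | h1'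
    · simp
    · have h3 := hkmin0 j h2
      rw [not_and] at h3
      have h4 := h3 h1'
      omega
  have hμlen : μ.length = δ.length + 1 := by omega
  have hkL : k < μ.length := by omega
  -- the east step at block k
  have hμk : 1 ≤ μ.getD k 0 := by
    obtain ⟨m, hm⟩ : ∃ m, k = m + 1 := ⟨k - 1, by omega⟩
    subst hm
    have h1 := hkmin m (by omega) (by omega)
    have h2 : (∑ t ∈ Finset.Ico (i₀ + 1) (m + 1 + 1), μ.getD t 0)
        = (∑ t ∈ Finset.Ico (i₀ + 1) (m + 1), μ.getD t 0) + μ.getD (m + 1) 0 :=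
      Finset.sum_Ico_succ_top (by omega) _
    have h3 : (∑ t ∈ Finset.Ico i₀ (m + 1), δ.getD t 0)
        = (∑ t ∈ Finset.Ico i₀ m, δ.getD t 0) + δ.getD m 0 :=
      Finset.sum_Ico_succ_top (by omega) _
    omega
  -- strict above between i₀ and k
  have habove1 : ∀ j, i₀ < j → j ≤ k → S μ j + 1 ≤ S ν j := by
    intro j h1 h2
    obtain ⟨x, hx⟩ : ∃ x, j = x + 1 := ⟨j - 1, by omega⟩
    subst hx
    have hx1 := hkmin x (by omega) (by omega)
    have hx2 := Dd_le hδ (i := i₀) (k := x) (by omega)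
    have hx3 := S_Mm μ (show i₀ ≤ x by omega)
    have hx4 : S ν (i₀ + 1) + ∑ t ∈ Finset.Ico (i₀ + 1) (x + 1), ν.getD t 0
        = S ν (x + 1) := sum_split _ (by omega)
    omega
  -- choose i' : the last return to equality before k
  have hPi₀ : i₀ ≤ i₀ ∧ (∑ t ∈ Finset.Ico i₀ i₀, δ.getD t 0) =
      ∑ t ∈ Finset.Ico (i₀ + 1) (i₀ + 1), μ.getD t 0 := ⟨le_rfl, by simp⟩
  obtain ⟨i', hi'P, hi'ge, hi'le, hi'gr⟩ :
      ∃ i', (i₀ ≤ i' ∧ (∑ t ∈ Finset.Ico i₀ i', δ.getD t 0) =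
          ∑ t ∈ Finset.Ico (i₀ + 1) (i' + 1), μ.getD t 0) ∧ i₀ ≤ i' ∧ i' ≤ k - 1 ∧
        ∀ j, i' < j → j ≤ k - 1 → ¬(i₀ ≤ j ∧ (∑ t ∈ Finset.Ico i₀ j, δ.getD t 0) =
          ∑ t ∈ Finset.Ico (i₀ + 1) (j + 1), μ.getD t 0) :=
    ⟨Nat.findGreatest (fun j => i₀ ≤ j ∧ (∑ t ∈ Finset.Ico i₀ j, δ.getD t 0) =
          ∑ t ∈ Finset.Ico (i₀ + 1) (j + 1), μ.getD t 0) (k - 1),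
      Nat.findGreatest_spec (P := (fun j => i₀ ≤ j ∧ (∑ t ∈ Finset.Ico i₀ j, δ.getD t 0) =
          ∑ t ∈ Finset.Ico (i₀ + 1) (j + 1), μ.getD t 0)) (n := k - 1) (show i₀ ≤ k - 1 by omega) hPi₀,
      Nat.le_findGreatest (P := (fun j => i₀ ≤ j ∧ (∑ t ∈ Finset.Ico i₀ j, δ.getD t 0) =
          ∑ t ∈ Finset.Ico (i₀ + 1) (j + 1), μ.getD t 0)) (n := k - 1) (show i₀ ≤ k - 1 by omega) hPi₀,
      Nat.findGreatest_le (P := (fun j => i₀ ≤ j ∧ (∑ t ∈ Finset.Ico i₀ j, δ.getD t 0) =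
          ∑ t ∈ Finset.Ico (i₀ + 1) (j + 1), μ.getD t 0)) _,
      fun j h1 h2 => Nat.findGreatest_is_greatest (P := (fun j => i₀ ≤ j ∧ (∑ t ∈ Finset.Ico i₀ j, δ.getD t 0) =
          ∑ t ∈ Finset.Ico (i₀ + 1) (j + 1), μ.getD t 0)) h1 h2⟩
  have hi'k : i' < k := by omega
  have hi'L : i' < μ.length := by omega
  -- strict inequalities between i' and k (base i₀)
  have hmid0 : ∀ j, i' < j → j < k →
      (∑ t ∈ Finset.Ico (i₀ + 1) (j + 1), μ.getD t 0) + 1 ≤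
        ∑ t ∈ Finset.Ico i₀ j, δ.getD t 0 := by
    intro j h1 h2
    have h3 := hkmin j (by omega) h2
    have h4 := hi'gr j h1 (by omega)
    by_contra hc
    push_neg at hc
    exact h4 ⟨by omega, by omega⟩
  -- rebase to i'
  have hsplD : ∀ x, i' ≤ x → (∑ t ∈ Finset.Ico i₀ i', δ.getD t 0) +
      (∑ t ∈ Finset.Ico i' x, δ.getD t 0) = ∑ t ∈ Finset.Ico i₀ x, δ.getD t 0 :=
    fun x hx => Finset.sum_Ico_consecutive _ hi'ge hx
  have hsplM : ∀ x, i' ≤ x → (∑ t ∈ Finset.Ico (i₀ + 1) (i' + 1), μ.getD t 0) +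
      (∑ t ∈ Finset.Ico (i' + 1) (x + 1), μ.getD t 0) =
        ∑ t ∈ Finset.Ico (i₀ + 1) (x + 1), μ.getD t 0 :=
    fun x hx => Finset.sum_Ico_consecutive _ (by omega) (by omega)
  have hkineq' : (∑ t ∈ Finset.Ico i' k, δ.getD t 0) + 1 ≤
      ∑ t ∈ Finset.Ico (i' + 1) (k + 1), μ.getD t 0 := by
    have h1 := hsplD k hi'k.le
    have h2 := hsplM k hi'k.le
    omega
  have hmid : ∀ j, i' < j → j < k →
      (∑ t ∈ Finset.Ico (i' + 1) (j + 1), μ.getD t 0) + 1 ≤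
        ∑ t ∈ Finset.Ico i' j, δ.getD t 0 := by
    intro j h1 h2
    have h3 := hmid0 j h1 h2
    have h4 := hsplD j (by omega)
    have h5 := hsplM j (by omega)
    omega
  -- the predecessor path
  set μ' := (μ.set k (μ.getD k 0 - 1)).set i' (μ.getD i' 0 + 1) with hμ'def
  have hμ'len : μ'.length = μ.length := by simp [hμ'def]
  have hg : ∀ t, μ'.getD t 0 =
      if t = i' then μ.getD i' 0 + 1 else if t = k then μ.getD k 0 - 1 else μ.getD t 0 := by
    intro t
    rw [hμ'def, getD_set _ _ _ t (by simpa using hi'L), getD_set _ _ _ t hkL]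
  have hS : ∀ j, S μ j + (if i' < j ∧ j ≤ k then 1 else 0) = S μ' j := by
    intro j
    have := S_move μ k i' (μ.getD k 0 - 1) (μ.getD i' 0 + 1) (by omega) hkL hi'L j
    rw [← hμ'def] at this
    split_ifs at this ⊢ <;> omega
  have hμ'path : IsNuPath ν μ' := by
    refine ⟨by omega, fun j => ?_, ?_⟩
    · rw [take_sum_eq, take_sum_eq]
      have h1 := hS j
      have h2 := hab j
      by_cases hj : i' < j ∧ j ≤ k
      · have h3 := habove1 j (by omega) hj.2
        rw [if_pos hj] at h1
        omega
      · rw [if_neg hj] at h1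
        omega
    · have h1 := hS μ.length
      rw [if_neg (by omega)] at h1
      have h2 : S μ' μ.length = μ'.sum := by rw [← hμ'len]; exact S_of_le le_rfl
      have h3 : S μ μ.length = μ.sum := S_of_le le_rfl
      omega
  -- the rotation μ' → μ
  have hrot : DRot δ μ' μ := by
    refine ⟨i', by omega, ?_, k, hi'k, by omega, ?_, ?_, ?_⟩
    · rw [hg i', if_pos rfl]; omega
    · -- Σ δ over [i',k) ≤ Σ μ' over (i',k]
      have e1 : (∑ t ∈ Finset.Ico (i' + 1) (k + 1), μ'.getD t 0)
          = (∑ t ∈ Finset.Ico (i' + 1) k, μ'.getD t 0) + μ'.getD k 0 :=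
        Finset.sum_Ico_succ_top (by omega) _
      have e2 : (∑ t ∈ Finset.Ico (i' + 1) k, μ'.getD t 0)
          = ∑ t ∈ Finset.Ico (i' + 1) k, μ.getD t 0 := by
        apply Finset.sum_congr rfl
        intro t ht
        have := Finset.mem_Ico.1 ht
        rw [hg t, if_neg (by omega), if_neg (by omega)]
      have e3 : (∑ t ∈ Finset.Ico (i' + 1) (k + 1), μ.getD t 0)
          = (∑ t ∈ Finset.Ico (i' + 1) k, μ.getD t 0) + μ.getD k 0 :=
        Finset.sum_Ico_succ_top (by omega) _
      have e4 : μ'.getD k 0 = μ.getD k 0 - 1 := by rw [hg k, if_neg (by omega), if_pos rfl]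
      omega
    · -- strictness below k
      intro k' h1 h2
      have e2 : (∑ t ∈ Finset.Ico (i' + 1) (k' + 1), μ'.getD t 0)
          = ∑ t ∈ Finset.Ico (i' + 1) (k' + 1), μ.getD t 0 := by
        apply Finset.sum_congr rfl
        intro t ht
        have := Finset.mem_Ico.1 ht
        rw [hg t, if_neg (by omega), if_neg (by omega)]
      have h3 := hmid k' h1 h2
      omega
    · -- μ is the rotation of μ'
      refine eq_of_getD (by simp [hμ'len]) (fun t ht => ?_)
      have e1 : ((μ'.set i' (μ'.getD i' 0 - 1)).set k (μ'.getD k 0 + 1)).getD t 0 =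
          if t = k then μ'.getD k 0 + 1 else if t = i' then μ'.getD i' 0 - 1 else μ'.getD t 0 := by
        rw [getD_set _ _ _ t (by simp [hμ'len]; omega), getD_set _ _ _ t (by omega)]
      rw [e1]
      have g1 := hg t
      have g2 := hg i'
      have g3 := hg k
      rw [if_pos rfl] at g2
      rw [if_neg (by omega), if_pos rfl] at g3
      rcases eq_or_ne t k with rfl | h1
      · rw [if_pos rfl]; omega
      · rw [if_neg h1]
        rcases eq_or_ne t i' with rfl | h2
        · rw [if_pos rfl]; omega
        · rw [if_neg h2, g1, if_neg h2, if_neg h1]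
  refine ⟨μ', hμ'path, hrot, fun j => ?_, ⟨k, by omega, ?_⟩⟩
  · have := hS j
    omega
  · have := hS k
    rw [if_pos ⟨hi'k, le_rfl⟩] at this
    omega

/-- Every ν-path is reachable from ν by δ-rotations. -/
lemma reach {ν δ : List ℕ} (hδ : IsIncrement ν δ) :
    ∀ μ, IsNuPath ν μ → altLE δ ν μ := by
  classical
  have main : ∀ d μ, IsNuPath ν μ →
      (∑ j ∈ Finset.range (ν.length + 1), S ν j) -
        (∑ j ∈ Finset.range (ν.length + 1), S μ j) ≤ d → altLE δ ν μ := by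
    intro d
    induction d with
    | zero =>
      intro μ hμ hd
      by_cases hne : μ = ν
      · subst hne; exact Relation.ReflTransGen.refl
      · exfalso
        obtain ⟨μ', hμ', _, hmono, j, hjlt, hjstrict⟩ := key hδ hμ hne
        have hlt : (∑ j ∈ Finset.range (ν.length + 1), S μ j) <
            ∑ j ∈ Finset.range (ν.length + 1), S μ' j :=
          Finset.sum_lt_sum (fun i _ => hmono i) ⟨j, Finset.mem_range.2 (by omega), hjstrict⟩
        have hle : (∑ j ∈ Finset.range (ν.length + 1), S μ' j) ≤
            ∑ j ∈ Finset.range (ν.length + 1), S ν j := by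
          apply Finset.sum_le_sum
          intro i _
          rw [← take_sum_eq, ← take_sum_eq]
          exact hμ'.2.1 i
        omega
    | succ d ih =>
      intro μ hμ hd
      by_cases hne : μ = ν
      · subst hne; exact Relation.ReflTransGen.refl
      · obtain ⟨μ', hμ', hrot, hmono, j, hjlt, hjstrict⟩ := key hδ hμ hne
        have hlt : (∑ j ∈ Finset.range (ν.length + 1), S μ j) <
            ∑ j ∈ Finset.range (ν.length + 1), S μ' j :=
          Finset.sum_lt_sum (fun i _ => hmono i) ⟨j, Finset.mem_range.2 (by omega), hjstrict⟩
        have hle : (∑ j ∈ Finset.range (ν.length + 1), S μ' j) ≤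
            ∑ j ∈ Finset.range (ν.length + 1), S ν j := by
          apply Finset.sum_le_sum
          intro i _
          rw [← take_sum_eq, ← take_sum_eq]
          exact hμ'.2.1 i
        exact Relation.ReflTransGen.tail (ih μ' hμ' (by omega)) hrot
  intro μ hμ
  exact main _ μ hμ le_rfl

end AltTam

/-- The alt ν-Tamari poset `T_ν(δ)` is the interval `[ν, 1^ν]`
in the ν̌-Tamari lattice: a ν̌-path `μ` satisfies `ν ≤ μ` in `Tam(ν̌)` if and
only if `μ` is a ν-path, and for ν-paths `P, Q` one has `P ≤ Q` in `T_ν(δ)` if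
and only if `P ≤ Q` in `Tam(ν̌)`. -/


theorem alt_tamari_is_interval_in_check_tamari (ν δ : List ℕ) (hν : ν ≠ [])
    (hδ : IsIncrement ν δ) :
    (∀ μ, IsNuPath (nuCheck ν δ) μ → (tamLE (nuCheck ν δ) ν μ ↔ IsNuPath ν μ)) ∧
    (∀ P Q, IsNuPath ν P → IsNuPath ν Q →
      (altLE δ P Q ↔ tamLE (nuCheck ν δ) P Q)) := by
  constructor
  · intro μ _
    constructor
    · intro h
      exact AltTam.altLE_path ((AltTam.altLE_iff_tamLE ν δ ν μ).2 h)
    · intro h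
      exact (AltTam.altLE_iff_tamLE ν δ ν μ).1 (AltTam.reach hδ μ h)
  · intro P Q _ _
    exact AltTam.altLE_iff_tamLE ν δ P Q
end
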